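/- arXiv:1408.4501 — 10 statements merged into one kernel-verified Lean document; each statement's English description precedes it below -/
import Mathlib

section
/- Let $h: (X_A,\sigma_A) \to (X_B,\sigma_B)$ and $g: (X_B,\sigma_B) \to (X_C,\sigma_C)$ be continuous orbit maps, with $\sigma_B^{k_1(x)}(h(\sigma_A(x))) = \sigma_B^{l_1(x)}(h(x))$ and $\sigma_C^{k_2(y)}(g(\sigma_B(y))) = \sigma_C^{l_2(y)}(g(y))$. Define $k_3(x) = k_2^{l_1(x)}(h(x)) + l_2^{k_1(x)}(h(\sigma_A(x)))$ and $l_3(x) = l_2^{l_1(x)}(h(x)) + k_2^{k_1(x)}(h(\sigma_A(x)))$, where $k_2^n$, $l_2^n$ are the ergodic sums of $k_2$, $l_2$ along $\sigma_B$. Then $\sigma_C^{k_3(x)}(g(h(\sigma_A(x)))) = \sigma_C^{l_3(x)}(g(h(x)))$ for all $x \in X_A$; hence $g \circ h : X_A \to X_C$ is a continuous orbit map. -/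
open Function Finset

/-- The one-sided topological Markov shift space of a `{0,1}`-matrix `A`. -/
abbrev MarkovShift {N : ℕ} (A : Matrix (Fin N) (Fin N) (Fin 2)) :=
  {x : ℕ → Fin N // ∀ n : ℕ, A (x n) (x (n + 1)) = 1}

/-- The shift map `σ_A` on the one-sided Markov shift. -/
def mshift {N : ℕ} (A : Matrix (Fin N) (Fin N) (Fin 2)) :
    MarkovShift A → MarkovShift A :=
  fun x => ⟨fun n => x.1 (n + 1), fun n => x.2 (n + 1)⟩

/-- Ergodic sums `f^n(x) = ∑_{i<n} f(σ^i x)`. -/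
def esum {X : Type*} (σ : X → X) (f : X → ℕ) (n : ℕ) (x : X) : ℕ :=
  ∑ i ∈ Finset.range n, f (σ^[i] x)

lemma mshift_continuous {N : ℕ} (A : Matrix (Fin N) (Fin N) (Fin 2)) :
    Continuous (mshift A) := by
  apply Continuous.subtype_mk
  exact continuous_pi fun n => (continuous_apply (n + 1)).comp continuous_subtype_val

lemma esum_cont {X Y : Type*} [TopologicalSpace X] [TopologicalSpace Y]
    {σ : X → X} (hσ : Continuous σ) {f : X → ℕ} (hf : Continuous f)
    {m : Y → ℕ} (hm : Continuous m) {u : Y → X} (hu : Continuous u) :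
    Continuous fun y => esum σ f (m y) (u y) := by
  rw [continuous_iff_continuousAt]
  intro y
  have hopen : IsOpen {z | m z = m y} := (isOpen_discrete {m y}).preimage hm
  have hmem : {z : Y | m z = m y} ∈ nhds y := hopen.mem_nhds rfl
  have heq : ∀ᶠ z in nhds y, esum σ f (m y) (u z) = esum σ f (m z) (u z) := by
    filter_upwards [hmem] with z hz
    rw [hz]
  have hc : Continuous fun z => esum σ f (m y) (u z) := by
    unfold esum
    exact continuous_finset_sum _ fun i _ => hf.comp ((hσ.iterate i).comp hu)
  exact hc.continuousAt.congr heq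

lemma iter_comm {Y : Type*} (τ : Y → Y) (a b : ℕ) (z : Y) :
    τ^[a] (τ^[b] z) = τ^[b] (τ^[a] z) := by
  rw [← Function.iterate_add_apply, Nat.add_comm, Function.iterate_add_apply]

lemma cocycle_iter {X Y : Type*} {σ : X → X} {τ : Y → Y} {g : X → Y}
    {k2 l2 : X → ℕ}
    (horb : ∀ y, τ^[k2 y] (g (σ y)) = τ^[l2 y] (g y)) (n : ℕ) (y : X) :
    τ^[esum σ k2 n y] (g (σ^[n] y)) = τ^[esum σ l2 n y] (g y) := by
  induction n with
  | zero => simp [esum]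
  | succ n ih =>
    have ek : esum σ k2 (n + 1) y = esum σ k2 n y + k2 (σ^[n] y) := by
      simp [esum, Finset.sum_range_succ]
    have el : esum σ l2 (n + 1) y = esum σ l2 n y + l2 (σ^[n] y) := by
      simp [esum, Finset.sum_range_succ]
    rw [ek, el]
    calc τ^[esum σ k2 n y + k2 (σ^[n] y)] (g (σ^[n+1] y))
        = τ^[esum σ k2 n y] (τ^[k2 (σ^[n] y)] (g (σ (σ^[n] y)))) := by
          rw [Nat.add_comm, Function.iterate_add_apply,
            Function.iterate_succ_apply' σ n y]
          exact iter_comm τ _ _ _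
      _ = τ^[esum σ k2 n y] (τ^[l2 (σ^[n] y)] (g (σ^[n] y))) := by rw [horb]
      _ = τ^[l2 (σ^[n] y)] (τ^[esum σ k2 n y] (g (σ^[n] y))) := iter_comm τ _ _ _
      _ = τ^[l2 (σ^[n] y)] (τ^[esum σ l2 n y] (g y)) := by rw [ih]
      _ = τ^[esum σ l2 n y + l2 (σ^[n] y)] (g y) := by
          rw [Nat.add_comm, Function.iterate_add_apply]

/-- the composition of two continuous orbit maps is a continuous orbit
map, with cocycle data `k_3, l_3` given by the stated ergodic sums. -/
theorem comp_continuousOrbitMap {N M P : ℕ}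
    (A : Matrix (Fin N) (Fin N) (Fin 2)) (B : Matrix (Fin M) (Fin M) (Fin 2))
    (C : Matrix (Fin P) (Fin P) (Fin 2))
    (h : MarkovShift A → MarkovShift B) (hlh : IsLocalHomeomorph h)
    (g : MarkovShift B → MarkovShift C) (hlg : IsLocalHomeomorph g)
    (k1 l1 : MarkovShift A → ℕ) (hk1 : Continuous k1) (hl1 : Continuous l1)
    (k2 l2 : MarkovShift B → ℕ) (hk2 : Continuous k2) (hl2 : Continuous l2)
    (horb1 : ∀ x, (mshift B)^[k1 x] (h (mshift A x)) = (mshift B)^[l1 x] (h x))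
    (horb2 : ∀ y, (mshift C)^[k2 y] (g (mshift B y)) = (mshift C)^[l2 y] (g y)) :
    (∀ x : MarkovShift A,
      (mshift C)^[esum (mshift B) k2 (l1 x) (h x) +
          esum (mshift B) l2 (k1 x) (h (mshift A x))] (g (h (mshift A x)))
        = (mshift C)^[esum (mshift B) l2 (l1 x) (h x) +
            esum (mshift B) k2 (k1 x) (h (mshift A x))] (g (h x))) ∧
    IsLocalHomeomorph (g ∘ h) ∧
    Continuous (fun x : MarkovShift A =>
      esum (mshift B) k2 (l1 x) (h x) + esum (mshift B) l2 (k1 x) (h (mshift A x))) ∧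
    Continuous (fun x : MarkovShift A =>
      esum (mshift B) l2 (l1 x) (h x) + esum (mshift B) k2 (k1 x) (h (mshift A x))) := by
  have hB := mshift_continuous B
  have hh := hlh.continuous
  have hhA : Continuous fun x => h (mshift A x) := hh.comp (mshift_continuous A)
  refine ⟨?_, hlg.comp hlh, ?_, ?_⟩
  · intro x
    set y1 := h (mshift A x)
    set y2 := h x
    have key1 : (mshift C)^[esum (mshift B) k2 (k1 x) y1] (g ((mshift B)^[k1 x] y1))
        = (mshift C)^[esum (mshift B) l2 (k1 x) y1] (g y1) :=
      cocycle_iter horb2 (k1 x) y1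
    have key2 : (mshift C)^[esum (mshift B) k2 (l1 x) y2] (g ((mshift B)^[l1 x] y2))
        = (mshift C)^[esum (mshift B) l2 (l1 x) y2] (g y2) :=
      cocycle_iter horb2 (l1 x) y2
    rw [horb1 x] at key1
    calc (mshift C)^[esum (mshift B) k2 (l1 x) y2 + esum (mshift B) l2 (k1 x) y1] (g y1)
        = (mshift C)^[esum (mshift B) k2 (l1 x) y2]
            ((mshift C)^[esum (mshift B) l2 (k1 x) y1] (g y1)) := by
          rw [Nat.add_comm, Function.iterate_add_apply]
          exact iter_comm _ _ _ _
      _ = (mshift C)^[esum (mshift B) k2 (l1 x) y2]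
            ((mshift C)^[esum (mshift B) k2 (k1 x) y1] (g ((mshift B)^[l1 x] y2))) := by
          rw [key1]
      _ = (mshift C)^[esum (mshift B) k2 (k1 x) y1]
            ((mshift C)^[esum (mshift B) k2 (l1 x) y2] (g ((mshift B)^[l1 x] y2))) := by
          exact iter_comm _ _ _ _
      _ = (mshift C)^[esum (mshift B) k2 (k1 x) y1]
            ((mshift C)^[esum (mshift B) l2 (l1 x) y2] (g y2)) := by rw [key2]
      _ = (mshift C)^[esum (mshift B) l2 (l1 x) y2 + esum (mshift B) k2 (k1 x) y1]
            (g y2) := by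
          rw [Function.iterate_add_apply]
          exact iter_comm _ _ _ _
  · exact (esum_cont hB hk2 hl1 hh).add (esum_cont hB hl2 hk1 hhA)
  · exact (esum_cont hB hl2 hl1 hh).add (esum_cont hB hk2 hk1 hhA)
end

section
/- Let $h: X_A \to X_B$ be a continuous orbit map (a local homeomorphism with continuous $k_1, l_1$ satisfying $\sigma_B^{k_1(x)}(h(\sigma_A(x))) = \sigma_B^{l_1(x)}(h(x))$). Suppose $X_B$ has a dense set of points which are not eventually periodic (in the sense that for every nonempty open set the non-eventually-periodic points are dense in it). Then the cocycle function $c_1(x) = l_1(x) - k_1(x)$ does not depend on the choice of $k_1, l_1$: if $k_1', l_1'$ also satisfy the orbit equation for $h$, then $l_1(x) - k_1(x) = l_1'(x) - k_1'(x)$ for all $x \in X_A$. -/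
open Function Finset

/-- the cocycle function `c_1 = l_1 - k_1` of a continuous orbit map does
not depend on the choice of `k_1, l_1`, provided the non-eventually-periodic points
are dense in `X_B` (a consequence of condition (I)). -/
theorem cocycle_function_well_defined {N M : ℕ}
    (A : Matrix (Fin N) (Fin N) (Fin 2)) (B : Matrix (Fin M) (Fin M) (Fin 2))
    (hdense : Dense {y : MarkovShift B |
      ¬ ∃ r s : ℕ, r ≠ s ∧ (mshift B)^[r] y = (mshift B)^[s] y})
    (h : MarkovShift A → MarkovShift B) (hlh : IsLocalHomeomorph h)
    (k1 l1 : MarkovShift A → ℕ) (hk1 : Continuous k1) (hl1 : Continuous l1)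
    (horb : ∀ x, (mshift B)^[k1 x] (h (mshift A x)) = (mshift B)^[l1 x] (h x))
    (k1' l1' : MarkovShift A → ℕ) (hk1' : Continuous k1') (hl1' : Continuous l1')
    (horb' : ∀ x, (mshift B)^[k1' x] (h (mshift A x)) = (mshift B)^[l1' x] (h x)) :
    ∀ x : MarkovShift A, (l1 x : ℤ) - (k1 x : ℤ) = (l1' x : ℤ) - (k1' x : ℤ) := by
  have hD : Dense (h ⁻¹' {y : MarkovShift B |
      ¬ ∃ r s : ℕ, r ≠ s ∧ (mshift B)^[r] y = (mshift B)^[s] y}) :=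
    hdense.preimage hlh.isOpenMap
  have key : (fun x => (l1 x : ℤ) + k1' x) = fun x => (l1' x : ℤ) + k1 x := by
    apply Continuous.ext_on hD
    · exact ((continuous_of_discreteTopology (f := fun n : ℕ => (n : ℤ))).comp hl1).add
        ((continuous_of_discreteTopology (f := fun n : ℕ => (n : ℤ))).comp hk1')
    · exact ((continuous_of_discreteTopology (f := fun n : ℕ => (n : ℤ))).comp hl1').add
        ((continuous_of_discreteTopology (f := fun n : ℕ => (n : ℤ))).comp hk1)
    · intro x hx
      have h1 := congrArg (mshift B)^[k1' x] (horb x)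
      have h2 := congrArg (mshift B)^[k1 x] (horb' x)
      rw [← Function.iterate_add_apply, ← Function.iterate_add_apply] at h1 h2
      rw [Nat.add_comm (k1 x) (k1' x)] at h2
      have h3 : (mshift B)^[k1' x + l1 x] (h x) = (mshift B)^[k1 x + l1' x] (h x) := by
        rw [← h1, ← h2]
      have : k1' x + l1 x = k1 x + l1' x := by
        by_contra hne
        exact hx ⟨_, _, hne, h3⟩
      simp only []
      omega
  intro x
  have := congrFun key x
  omega
end

section
/- Let $h: X_A \to X_B$ be a continuous orbit map with functions $k_1, l_1$. For $f \in C(X_B, \mathbb{Z})$ define $\Psi_h(f)(x) = \sum_{i=0}^{l_1(x)-1} f(\sigma_B^i(h(x))) - \sum_{j=0}^{k_1(x)-1} f(\sigma_B^j(h(\sigma_A(x))))$. Then for all $f \in C(X_B,\mathbb{Z})$, $x \in X_A$ and $m \geq 1$: $\sum_{i=0}^{m-1} \Psi_h(f)(\sigma_A^i(x))$ (where each summand uses $l_1, k_1$ at $\sigma_A^i(x)$) equals $\sum_{i'=0}^{l_1^m(x)-1} f(\sigma_B^{i'}(h(x))) - \sum_{j'=0}^{k_1^m(x)-1} f(\sigma_B^{j'}(h(\sigma_A^m(x))))$,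 where $k_1^m, l_1^m$ are the ergodic sums along $\sigma_A$. -/
open Function Finset

/-- The map `Ψ_h(f)(x) = ∑_{i<l(x)} f(σ_Y^i(h x)) - ∑_{j<k(x)} f(σ_Y^j(h(σ_X x)))`
induced by a continuous orbit map `h` with data `(k, l)`. -/
def cocycleSum {X Y : Type*} (σX : X → X) (σY : Y → Y) (h : X → Y)
    (k l : X → ℕ) (f : Y → ℤ) (x : X) : ℤ :=
  (∑ i ∈ Finset.range (l x), f (σY^[i] (h x))) -
    ∑ j ∈ Finset.range (k x), f (σY^[j] (h (σX x)))


lemma esum_orbit {X Y : Type*} (σX : X → X) (σY : Y → Y) (h : X → Y)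
    (k1 l1 : X → ℕ)
    (horb : ∀ x, σY^[k1 x] (h (σX x)) = σY^[l1 x] (h x)) :
    ∀ (m : ℕ) (x : X),
      σY^[esum σX k1 m x] (h (σX^[m] x)) = σY^[esum σX l1 m x] (h x) := by
  intro m
  induction m with
  | zero => intro x; simp [esum]
  | succ m ih =>
    intro x
    have hK : esum σX k1 (m + 1) x = esum σX k1 m x + k1 (σX^[m] x) :=
      Finset.sum_range_succ _ _
    have hL : esum σX l1 (m + 1) x = esum σX l1 m x + l1 (σX^[m] x) :=
      Finset.sum_range_succ _ _
    rw [hK, hL, Function.iterate_succ_apply' σX m x,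
      Function.iterate_add_apply, horb (σX^[m] x), ← Function.iterate_add_apply,
      add_comm (esum σX k1 m x) (l1 (σX^[m] x)), Function.iterate_add_apply,
      ih x, ← Function.iterate_add_apply, add_comm]

/-- the telescoping formula for sums of `Ψ_h(f)` along the orbit. -/
theorem cocycleSum_telescope {N M : ℕ}
    (A : Matrix (Fin N) (Fin N) (Fin 2)) (B : Matrix (Fin M) (Fin M) (Fin 2))
    (h : MarkovShift A → MarkovShift B) (hlh : IsLocalHomeomorph h)
    (k1 l1 : MarkovShift A → ℕ) (hk1 : Continuous k1) (hl1 : Continuous l1)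
    (horb : ∀ x, (mshift B)^[k1 x] (h (mshift A x)) = (mshift B)^[l1 x] (h x)) :
    ∀ (f : MarkovShift B → ℤ), Continuous f →
      ∀ (x : MarkovShift A) (m : ℕ), 1 ≤ m →
        ∑ i ∈ Finset.range m,
            cocycleSum (mshift A) (mshift B) h k1 l1 f ((mshift A)^[i] x)
          = (∑ i ∈ Finset.range (esum (mshift A) l1 m x), f ((mshift B)^[i] (h x))) -
              ∑ j ∈ Finset.range (esum (mshift A) k1 m x),
                f ((mshift B)^[j] (h ((mshift A)^[m] x))) := by
  intro f _ x m hm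
  clear hm
  induction m with
  | zero => simp [esum]
  | succ m ih =>
    have hK : esum (mshift A) k1 (m + 1) x
        = esum (mshift A) k1 m x + k1 ((mshift A)^[m] x) := Finset.sum_range_succ _ _
    have hL : esum (mshift A) l1 (m + 1) x
        = esum (mshift A) l1 m x + l1 ((mshift A)^[m] x) := Finset.sum_range_succ _ _
    set K := esum (mshift A) k1 m x with hKdef
    set L := esum (mshift A) l1 m x with hLdef
    set y := (mshift A)^[m] x with hydef
    rw [Finset.sum_range_succ, ih, hK, hL, Function.iterate_succ_apply' (mshift A) m x,
      cocycleSum, Finset.sum_range_add, add_comm K (k1 y), Finset.sum_range_add]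
    have e1 : ∀ i, f ((mshift B)^[L + i] (h x)) = f ((mshift B)^[K + i] (h y)) := by
      intro i
      rw [add_comm L i, add_comm K i, Function.iterate_add_apply,
        Function.iterate_add_apply, esum_orbit (mshift A) (mshift B) h k1 l1 horb m x]
    have e2 : ∀ j, f ((mshift B)^[k1 y + j] (h (mshift A y)))
        = f ((mshift B)^[l1 y + j] (h y)) := by
      intro j
      rw [add_comm (k1 y) j, add_comm (l1 y) j, Function.iterate_add_apply,
        Function.iterate_add_apply, horb y]
    simp only [← hydef, e1, e2]
    have h1 : ∑ i ∈ Finset.range (l1 y + K), f ((mshift B)^[i] (h y))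
        = ∑ i ∈ Finset.range (l1 y), f ((mshift B)^[i] (h y))
          + ∑ j ∈ Finset.range K, f ((mshift B)^[l1 y + j] (h y)) :=
      Finset.sum_range_add _ _ _
    have h2 : ∑ i ∈ Finset.range (K + l1 y), f ((mshift B)^[i] (h y))
        = ∑ j ∈ Finset.range K, f ((mshift B)^[j] (h y))
          + ∑ i ∈ Finset.range (l1 y), f ((mshift B)^[K + i] (h y)) :=
      Finset.sum_range_add _ _ _
    rw [add_comm (l1 y) K] at h1
    linarith
end

section
/- Let $h: X_A \to X_B$ be a continuous orbit map with functions $k_1, l_1$, and let $\Psi_h : C(X_B,\mathbb{Z}) \to C(X_A,\mathbb{Z})$ be given by $\Psi_h(f)(x) = \sum_{i=0}^{l_1(x)-1} f(\sigma_B^i(h(x))) - \sum_{j=0}^{k_1(x)-1} f(\sigma_B^j(h(\sigma_A(x))))$. Then for every $f \in C(X_B,\mathbb{Z})$: $\Psi_h(f - f \circ \sigma_B) = f \circ h - f \circ h \circ \sigma_A$. In particular $\Psi_h$ maps the coboundary subgroup $\{\xi - \xi\circ\sigma_B\}$ into the coboundary subgroup $\{\xi - \xi\circ\sigma_A\}$.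 -/
open Function Finset

/-- `Ψ_h(f - f∘σ_B) = f∘h - f∘h∘σ_A`, and in particular `Ψ_h` maps the
coboundary subgroup of `σ_B` into the coboundary subgroup of `σ_A`. -/
theorem cocycleSum_coboundary {N M : ℕ}
    (A : Matrix (Fin N) (Fin N) (Fin 2)) (B : Matrix (Fin M) (Fin M) (Fin 2))
    (h : MarkovShift A → MarkovShift B) (hlh : IsLocalHomeomorph h)
    (k1 l1 : MarkovShift A → ℕ) (hk1 : Continuous k1) (hl1 : Continuous l1)
    (horb : ∀ x, (mshift B)^[k1 x] (h (mshift A x)) = (mshift B)^[l1 x] (h x)) :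
    (∀ (f : MarkovShift B → ℤ), Continuous f →
      ∀ x : MarkovShift A,
        cocycleSum (mshift A) (mshift B) h k1 l1 (fun y => f y - f (mshift B y)) x
          = f (h x) - f (h (mshift A x))) ∧
    (∀ (ξ : MarkovShift B → ℤ), Continuous ξ →
      ∃ η : MarkovShift A → ℤ, Continuous η ∧
        ∀ x : MarkovShift A,
          cocycleSum (mshift A) (mshift B) h k1 l1 (fun y => ξ y - ξ (mshift B y)) x
            = η x - η (mshift A x)) := by
  have tel : ∀ (f : MarkovShift B → ℤ) (y : MarkovShift B) (n : ℕ),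
      (∑ i ∈ Finset.range n, (f ((mshift B)^[i] y) - f (mshift B ((mshift B)^[i] y))))
        = f y - f ((mshift B)^[n] y) := by
    intro f y n
    have := Finset.sum_range_sub' (fun i => f ((mshift B)^[i] y)) n
    simpa [Function.iterate_succ_apply'] using this
  have key : ∀ (f : MarkovShift B → ℤ) (x : MarkovShift A),
      cocycleSum (mshift A) (mshift B) h k1 l1 (fun y => f y - f (mshift B y)) x
        = f (h x) - f (h (mshift A x)) := by
    intro f x
    unfold cocycleSum
    rw [tel, tel, horb x]
    ring
  refine ⟨fun f _ x => key f x, fun ξ hξ => ⟨fun x => ξ (h x), hξ.comp hlh.continuous, fun x => key ξ x⟩⟩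
end

section
/- Let $h: (X_A,\sigma_A) \to (X_B,\sigma_B)$ and $g: (X_B,\sigma_B) \to (X_C,\sigma_C)$ be continuous orbit maps. Then $\Psi_h \circ \Psi_g = \Psi_{g\circ h}$ as group homomorphisms from $C(X_C,\mathbb{Z})$ to $C(X_A,\mathbb{Z})$, where $g \circ h$ is equipped with the cocycle data $k_3(x) = k_2^{l_1(x)}(h(x)) + l_2^{k_1(x)}(h(\sigma_A(x)))$, $l_3(x) = l_2^{l_1(x)}(h(x)) + k_2^{k_1(x)}(h(\sigma_A(x)))$. -/
open Function Finset

private lemma sum_shift {Z : Type*} (σ : Z → Z) (f : Z → ℤ) (a b : ℕ) (z : Z) :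
    ∑ i ∈ Finset.range (a + b), f (σ^[i] z)
      = (∑ i ∈ Finset.range a, f (σ^[i] z))
        + ∑ i ∈ Finset.range b, f (σ^[i] (σ^[a] z)) := by
  rw [Finset.sum_range_add]
  congr 1
  refine Finset.sum_congr rfl fun i _ => ?_
  rw [← Function.iterate_add_apply, Nat.add_comm]

private lemma orbit_iter {Y Z : Type*} (σY : Y → Y) (σZ : Z → Z) (g : Y → Z)
    (k2 l2 : Y → ℕ)
    (horb : ∀ y, σZ^[k2 y] (g (σY y)) = σZ^[l2 y] (g y)) :
    ∀ n y, σZ^[esum σY k2 n y] (g (σY^[n] y)) = σZ^[esum σY l2 n y] (g y) := by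
  intro n
  induction n with
  | zero => intro y; simp [esum]
  | succ n ih =>
    intro y
    have hk : esum σY k2 (n + 1) y = esum σY k2 n y + k2 (σY^[n] y) := by
      simp [esum, Finset.sum_range_succ]
    have hl : esum σY l2 (n + 1) y = l2 (σY^[n] y) + esum σY l2 n y := by
      simp [esum, Finset.sum_range_succ, Nat.add_comm]
    rw [hk, hl, Function.iterate_add_apply, Function.iterate_succ_apply' σY,
      horb (σY^[n] y), ← Function.iterate_add_apply, Nat.add_comm,
      Function.iterate_add_apply, ih y, ← Function.iterate_add_apply]

private lemma cocycle_esum {Y Z : Type*} (σY : Y → Y) (σZ : Z → Z) (g : Y → Z)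
    (k2 l2 : Y → ℕ)
    (horb : ∀ y, σZ^[k2 y] (g (σY y)) = σZ^[l2 y] (g y)) (f : Z → ℤ) :
    ∀ n y, ∑ i ∈ Finset.range n, cocycleSum σY σZ g k2 l2 f (σY^[i] y)
      = (∑ i ∈ Finset.range (esum σY l2 n y), f (σZ^[i] (g y)))
        - ∑ i ∈ Finset.range (esum σY k2 n y), f (σZ^[i] (g (σY^[n] y))) := by
  intro n
  induction n with
  | zero => intro y; simp [esum]
  | succ n ih =>
    intro y
    have hk : esum σY k2 (n + 1) y = esum σY k2 n y + k2 (σY^[n] y) := by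
      simp [esum, Finset.sum_range_succ]
    have hl : esum σY l2 (n + 1) y = esum σY l2 n y + l2 (σY^[n] y) := by
      simp [esum, Finset.sum_range_succ]
    set z := g (σY^[n] y) with hz
    set K := esum σY k2 n y with hK
    set L := esum σY l2 n y with hL
    set a := l2 (σY^[n] y) with ha
    set b := k2 (σY^[n] y) with hb
    have horbz : σZ^[b] (g (σY^[n + 1] y)) = σZ^[a] z := by
      rw [Function.iterate_succ_apply' σY, horb]
    have hoi : σZ^[L] (g y) = σZ^[K] z := (orbit_iter σY σZ g k2 l2 horb n y).symm
    have e1 : ∑ i ∈ Finset.range (L + a), f (σZ^[i] (g y))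
        = (∑ i ∈ Finset.range L, f (σZ^[i] (g y)))
          + ∑ i ∈ Finset.range a, f (σZ^[i] (σZ^[K] z)) := by
      rw [sum_shift, hoi]
    have e2 : ∑ i ∈ Finset.range (K + b), f (σZ^[i] (g (σY^[n + 1] y)))
        = (∑ i ∈ Finset.range b, f (σZ^[i] (g (σY^[n + 1] y))))
          + ∑ i ∈ Finset.range K, f (σZ^[i] (σZ^[a] z)) := by
      rw [Nat.add_comm K b, sum_shift, horbz]
    have e3 : (∑ i ∈ Finset.range K, f (σZ^[i] z))
          + ∑ i ∈ Finset.range a, f (σZ^[i] (σZ^[K] z))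
        = (∑ i ∈ Finset.range a, f (σZ^[i] z))
          + ∑ i ∈ Finset.range K, f (σZ^[i] (σZ^[a] z)) := by
      rw [← sum_shift, ← sum_shift, Nat.add_comm]
    have hF : cocycleSum σY σZ g k2 l2 f (σY^[n] y)
        = (∑ i ∈ Finset.range a, f (σZ^[i] z))
          - ∑ i ∈ Finset.range b, f (σZ^[i] (g (σY^[n + 1] y))) := by
      rw [cocycleSum, ← Function.iterate_succ_apply' σY]
    rw [Finset.sum_range_succ, ih y, hk, hl, e1, e2, hF]
    linarith [e3]

/-- `Ψ_h ∘ Ψ_g = Ψ_{g∘h}`, where `g ∘ h` carries the cocycle data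
`k_3(x) = k_2^{l_1(x)}(h(x)) + l_2^{k_1(x)}(h(σ_A(x)))` and
`l_3(x) = l_2^{l_1(x)}(h(x)) + k_2^{k_1(x)}(h(σ_A(x)))`. -/
theorem cocycleSum_comp {N M P : ℕ}
    (A : Matrix (Fin N) (Fin N) (Fin 2)) (B : Matrix (Fin M) (Fin M) (Fin 2))
    (C : Matrix (Fin P) (Fin P) (Fin 2))
    (h : MarkovShift A → MarkovShift B) (hlh : IsLocalHomeomorph h)
    (g : MarkovShift B → MarkovShift C) (hlg : IsLocalHomeomorph g)
    (k1 l1 : MarkovShift A → ℕ) (hk1 : Continuous k1) (hl1 : Continuous l1)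
    (k2 l2 : MarkovShift B → ℕ) (hk2 : Continuous k2) (hl2 : Continuous l2)
    (horb1 : ∀ x, (mshift B)^[k1 x] (h (mshift A x)) = (mshift B)^[l1 x] (h x))
    (horb2 : ∀ y, (mshift C)^[k2 y] (g (mshift B y)) = (mshift C)^[l2 y] (g y)) :
    ∀ (f : MarkovShift C → ℤ) (x : MarkovShift A),
      cocycleSum (mshift A) (mshift B) h k1 l1
          (cocycleSum (mshift B) (mshift C) g k2 l2 f) x
        = cocycleSum (mshift A) (mshift C) (g ∘ h)
            (fun x => esum (mshift B) k2 (l1 x) (h x) +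
              esum (mshift B) l2 (k1 x) (h (mshift A x)))
            (fun x => esum (mshift B) l2 (l1 x) (h x) +
              esum (mshift B) k2 (k1 x) (h (mshift A x))) f x := by
  intro f x
  set σA := mshift A
  set σB := mshift B
  set σC := mshift C
  set A1 := esum σB l2 (l1 x) (h x) with hA1
  set B1 := esum σB k2 (l1 x) (h x) with hB1
  set A2 := esum σB k2 (k1 x) (h (σA x)) with hA2
  set B2 := esum σB l2 (k1 x) (h (σA x)) with hB2
  set Z := g (σB^[l1 x] (h x)) with hZ
  have hZ' : g (σB^[k1 x] (h (σA x))) = Z := by rw [horb1 x]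
  have lhs1 := cocycle_esum σB σC g k2 l2 horb2 f (l1 x) (h x)
  have lhs2 := cocycle_esum σB σC g k2 l2 horb2 f (k1 x) (h (σA x))
  have o1 : σC^[B1] Z = σC^[A1] (g (h x)) :=
    orbit_iter σB σC g k2 l2 horb2 (l1 x) (h x)
  have o2 : σC^[A2] Z = σC^[B2] (g (h (σA x))) := by
    rw [← hZ']; exact orbit_iter σB σC g k2 l2 horb2 (k1 x) (h (σA x))
  have e1 : ∑ i ∈ Finset.range (A1 + A2), f (σC^[i] (g (h x)))
      = (∑ i ∈ Finset.range A1, f (σC^[i] (g (h x))))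
        + ∑ i ∈ Finset.range A2, f (σC^[i] (σC^[B1] Z)) := by
    rw [sum_shift, o1]
  have e2 : ∑ i ∈ Finset.range (B1 + B2), f (σC^[i] (g (h (σA x))))
      = (∑ i ∈ Finset.range B2, f (σC^[i] (g (h (σA x)))))
        + ∑ i ∈ Finset.range B1, f (σC^[i] (σC^[A2] Z)) := by
    rw [Nat.add_comm B1 B2, sum_shift, o2]
  have e3 : (∑ i ∈ Finset.range B1, f (σC^[i] Z))
        + ∑ i ∈ Finset.range A2, f (σC^[i] (σC^[B1] Z))
      = (∑ i ∈ Finset.range A2, f (σC^[i] Z))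
        + ∑ i ∈ Finset.range B1, f (σC^[i] (σC^[A2] Z)) := by
    rw [← sum_shift, ← sum_shift, Nat.add_comm]
  rw [cocycleSum, cocycleSum, lhs1, lhs2]
  simp only [Function.comp_apply, ← hZ, hZ', ← hA1, ← hA2, ← hB1, ← hB2]
  rw [e1, e2]
  linarith [e3]
end

section
/- Suppose $h: X_A \to X_B$ is a homeomorphism giving a continuous orbit equivalence, with data $(k_1,l_1)$ for $h$ and $(k_2,l_2)$ for $h^{-1}$, and set $c_1 = l_1 - k_1$, $c_2 = l_2 - k_2$. Then the following are equivalent: (i) $[c_1] = [1_A]$ in $H^A = C(X_A,\mathbb{Z})/\mathrm{cobdy}(\sigma_A)$; (ii) $[c_2] = [1_B]$ in $H^B$. (Either condition defines strongly continuous orbit equivalence.) -/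
open Function Finset

lemma esum_succ {X : Type*} (σ : X → X) (f : X → ℕ) (n : ℕ) (x : X) :
    esum σ f (n + 1) x = esum σ f n x + f (σ^[n] x) := Finset.sum_range_succ _ _

lemma esum_zero {X : Type*} (σ : X → X) (f : X → ℕ) (x : X) :
    esum σ f 0 x = 0 := Finset.sum_range_zero _

lemma cocycle_iter_s7 {N M : ℕ} {A : Matrix (Fin N) (Fin N) (Fin 2)}
    {B : Matrix (Fin M) (Fin M) (Fin 2)}
    (h : MarkovShift A ≃ₜ MarkovShift B) (k1 l1 : MarkovShift A → ℕ)
    (horb1 : ∀ x, (mshift B)^[k1 x] (h (mshift A x)) = (mshift B)^[l1 x] (h x))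
    (n : ℕ) (x : MarkovShift A) :
    (mshift B)^[esum (mshift A) k1 n x] (h ((mshift A)^[n] x)) =
      (mshift B)^[esum (mshift A) l1 n x] (h x) := by
  induction n with
  | zero => simp [esum_zero]
  | succ n ih =>
    rw [esum_succ, esum_succ, iterate_succ_apply' (mshift A)]
    calc (mshift B)^[esum (mshift A) k1 n x + k1 ((mshift A)^[n] x)]
            (h (mshift A ((mshift A)^[n] x)))
        = (mshift B)^[esum (mshift A) k1 n x]
            ((mshift B)^[k1 ((mshift A)^[n] x)] (h (mshift A ((mshift A)^[n] x)))) := by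
          rw [iterate_add_apply]
      _ = (mshift B)^[esum (mshift A) k1 n x]
            ((mshift B)^[l1 ((mshift A)^[n] x)] (h ((mshift A)^[n] x))) := by
          rw [horb1]
      _ = (mshift B)^[l1 ((mshift A)^[n] x)]
            ((mshift B)^[esum (mshift A) k1 n x] (h ((mshift A)^[n] x))) := by
          rw [← iterate_add_apply, ← iterate_add_apply, add_comm]
      _ = (mshift B)^[l1 ((mshift A)^[n] x)]
            ((mshift B)^[esum (mshift A) l1 n x] (h x)) := by rw [ih]
      _ = (mshift B)^[esum (mshift A) l1 n x + l1 ((mshift A)^[n] x)] (h x) := by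
          rw [← iterate_add_apply, add_comm]

lemma telescope {N : ℕ} {A : Matrix (Fin N) (Fin N) (Fin 2)}
    (k1 l1 : MarkovShift A → ℕ) (b1 : MarkovShift A → ℤ)
    (hb1 : ∀ x, (l1 x : ℤ) - (k1 x : ℤ) = 1 + b1 x - b1 (mshift A x))
    (n : ℕ) (x : MarkovShift A) :
    (esum (mshift A) l1 n x : ℤ) - (esum (mshift A) k1 n x : ℤ) =
      n + b1 x - b1 ((mshift A)^[n] x) := by
  induction n with
  | zero => simp [esum_zero]
  | succ n ih =>
    rw [esum_succ, esum_succ, iterate_succ_apply' (mshift A)]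
    have := hb1 ((mshift A)^[n] x)
    push_cast
    push_cast at ih
    linarith

lemma scoe_key {N M : ℕ} (A : Matrix (Fin N) (Fin N) (Fin 2))
    (B : Matrix (Fin M) (Fin M) (Fin 2))
    (hdenseB : Dense {y : MarkovShift B |
      ¬ ∃ r s : ℕ, r ≠ s ∧ (mshift B)^[r] y = (mshift B)^[s] y})
    (h : MarkovShift A ≃ₜ MarkovShift B)
    (k1 l1 : MarkovShift A → ℕ)
    (k2 l2 : MarkovShift B → ℕ) (hk2 : Continuous k2) (hl2 : Continuous l2)
    (horb1 : ∀ x, (mshift B)^[k1 x] (h (mshift A x)) = (mshift B)^[l1 x] (h x))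
    (horb2 : ∀ y, (mshift A)^[k2 y] (h.symm (mshift B y)) = (mshift A)^[l2 y] (h.symm y))
    (b1 : MarkovShift A → ℤ) (hb1c : Continuous b1)
    (hb1 : ∀ x, (l1 x : ℤ) - (k1 x : ℤ) = 1 + b1 x - b1 (mshift A x)) :
    ∃ b2 : MarkovShift B → ℤ, Continuous b2 ∧
      ∀ y, (l2 y : ℤ) - (k2 y : ℤ) = 1 + b2 y - b2 (mshift B y) := by
  set D : MarkovShift B → ℤ := fun y =>
    (l2 y : ℤ) - (k2 y : ℤ) + b1 (h.symm y) - b1 (h.symm (mshift B y)) with hDdef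
  have hDc : Continuous D := by
    have cl2 : Continuous fun y => (l2 y : ℤ) :=
      Continuous.comp (continuous_of_discreteTopology) hl2
    have ck2 : Continuous fun y => (k2 y : ℤ) :=
      Continuous.comp (continuous_of_discreteTopology) hk2
    have cb : Continuous fun y : MarkovShift B => b1 (h.symm y) :=
      hb1c.comp h.symm.continuous
    have cb' : Continuous fun y : MarkovShift B => b1 (h.symm (mshift B y)) :=
      hb1c.comp (h.symm.continuous.comp (mshift_continuous B))
    exact ((cl2.sub ck2).add cb).sub cb'
  have hD1 : D = fun _ => (1 : ℤ) := by
    apply Continuous.ext_on hdenseB hDc continuous_const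
    intro y hy
    simp only [Set.mem_setOf_eq] at hy
    set x := h.symm y with hx
    set x' := h.symm (mshift B y) with hx'
    have hxx : (mshift A)^[k2 y] x' = (mshift A)^[l2 y] x := horb2 y
    have e1 := cocycle_iter_s7 h k1 l1 horb1 (l2 y) x
    have e2 := cocycle_iter_s7 h k1 l1 horb1 (k2 y) x'
    rw [h.apply_symm_apply] at e1
    rw [h.apply_symm_apply, hxx] at e2
    have e3 : (mshift B)^[esum (mshift A) k1 (k2 y) x' + esum (mshift A) l1 (l2 y) x] y =
        (mshift B)^[esum (mshift A) k1 (k2 y) x' + esum (mshift A) k1 (l2 y) x]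
          (h ((mshift A)^[l2 y] x)) := by
      rw [iterate_add_apply, iterate_add_apply, e1]
    have e4 : (mshift B)^[esum (mshift A) k1 (l2 y) x + (esum (mshift A) l1 (k2 y) x' + 1)] y =
        (mshift B)^[esum (mshift A) k1 (l2 y) x + esum (mshift A) k1 (k2 y) x']
          (h ((mshift A)^[l2 y] x)) := by
      rw [iterate_add_apply, iterate_succ_apply (mshift B) (esum (mshift A) l1 (k2 y) x') y,
        ← e2, ← iterate_add_apply]
    have key : esum (mshift A) k1 (k2 y) x' + esum (mshift A) l1 (l2 y) x =
        esum (mshift A) k1 (l2 y) x + (esum (mshift A) l1 (k2 y) x' + 1) := by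
      by_contra hne
      exact hy ⟨_, _, hne, by rw [e3, e4, add_comm]⟩
    have keyZ := congrArg (fun n : ℕ => (n : ℤ)) key
    push_cast at keyZ
    have t1 := telescope k1 l1 b1 hb1 (l2 y) x
    have t2 := telescope k1 l1 b1 hb1 (k2 y) x'
    rw [hxx] at t2
    simp only [hDdef]
    linarith
  refine ⟨fun y => - b1 (h.symm y), (hb1c.comp h.symm.continuous).neg, fun y => ?_⟩
  have := congrFun hD1 y
  simp only [hDdef] at this
  show (l2 y : ℤ) - (k2 y : ℤ) = 1 + -b1 (h.symm y) - -b1 (h.symm (mshift B y))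
  linarith

/-- for a continuous orbit equivalence `h`, the class of the cocycle
`c_1 = l_1 - k_1` equals `[1_A]` in `H^A` iff the class of `c_2 = l_2 - k_2` equals
`[1_B]` in `H^B` (either condition defines strongly continuous orbit equivalence). -/
theorem scoe_cocycle_iff {N M : ℕ}
    (A : Matrix (Fin N) (Fin N) (Fin 2)) (B : Matrix (Fin M) (Fin M) (Fin 2))
    (hdenseA : Dense {x : MarkovShift A |
      ¬ ∃ r s : ℕ, r ≠ s ∧ (mshift A)^[r] x = (mshift A)^[s] x})
    (hdenseB : Dense {y : MarkovShift B |
      ¬ ∃ r s : ℕ, r ≠ s ∧ (mshift B)^[r] y = (mshift B)^[s] y})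
    (h : MarkovShift A ≃ₜ MarkovShift B)
    (k1 l1 : MarkovShift A → ℕ) (hk1 : Continuous k1) (hl1 : Continuous l1)
    (k2 l2 : MarkovShift B → ℕ) (hk2 : Continuous k2) (hl2 : Continuous l2)
    (horb1 : ∀ x, (mshift B)^[k1 x] (h (mshift A x)) = (mshift B)^[l1 x] (h x))
    (horb2 : ∀ y, (mshift A)^[k2 y] (h.symm (mshift B y)) = (mshift A)^[l2 y] (h.symm y)) :
    (∃ b1 : MarkovShift A → ℤ, Continuous b1 ∧
        ∀ x, (l1 x : ℤ) - (k1 x : ℤ) = 1 + b1 x - b1 (mshift A x)) ↔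
    (∃ b2 : MarkovShift B → ℤ, Continuous b2 ∧
        ∀ y, (l2 y : ℤ) - (k2 y : ℤ) = 1 + b2 y - b2 (mshift B y)) := by
  constructor
  · rintro ⟨b1, hb1c, hb1⟩
    exact scoe_key A B hdenseB h k1 l1 k2 l2 hk2 hl2 horb1 horb2 b1 hb1c hb1
  · rintro ⟨b2, hb2c, hb2⟩
    have horb1' : ∀ x, (mshift B)^[k1 x] (h.symm.symm (mshift A x)) =
        (mshift B)^[l1 x] (h.symm.symm x) := by
      simpa using horb1
    exact scoe_key B A hdenseA h.symm k2 l2 k1 l1 hk1 hl1 horb2 horb1' b2 hb2c hb2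
end

section
/- Suppose $(X_A,\sigma_A)$ and $(X_B,\sigma_B)$ are strongly continuous orbit equivalent via $h$, with data $k_1,l_1,b_1$ on $X_A$ and $k_2,l_2,b_2$ on $X_B$, and $X_A$ is a topologically transitive compact Markov shift (so that every continuous $\sigma_A$-invariant integer-valued function is constant). Then there exists $N_h \in \mathbb{N}$ such that $b_1(x) + b_2(h(x)) = N_h$ for all $x \in X_A$. -/
open Function Finset

lemma esum_tele {M : ℕ} {B : Matrix (Fin M) (Fin M) (Fin 2)}
    (k2 l2 b2 : MarkovShift B → ℕ)
    (hcoc2 : ∀ y, (l2 y : ℤ) - (k2 y : ℤ) = 1 + (b2 y : ℤ) - (b2 (mshift B y) : ℤ))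
    (n : ℕ) (y : MarkovShift B) :
    (esum (mshift B) l2 n y : ℤ) - esum (mshift B) k2 n y
      = n + b2 y - b2 ((mshift B)^[n] y) := by
  induction n with
  | zero => simp [esum]
  | succ n ih =>
    have hc := hcoc2 ((mshift B)^[n] y)
    rw [Function.iterate_succ_apply']
    simp only [esum, Finset.sum_range_succ] at *
    push_cast at *
    omega

/-- for a strongly continuous orbit equivalence, `b_1(x) + b_2(h(x))` is
a constant `N_h`. -/
theorem b1_add_b2_constant {N M : ℕ}
    (A : Matrix (Fin N) (Fin N) (Fin 2)) (B : Matrix (Fin M) (Fin M) (Fin 2))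
    (h : MarkovShift A ≃ₜ MarkovShift B)
    (k1 l1 b1 : MarkovShift A → ℕ) (k2 l2 b2 : MarkovShift B → ℕ)
    (hk1 : Continuous k1) (hl1 : Continuous l1) (hb1 : Continuous b1)
    (hk2 : Continuous k2) (hl2 : Continuous l2) (hb2 : Continuous b2)
    (horb1 : ∀ x, (mshift B)^[k1 x] (h (mshift A x)) = (mshift B)^[l1 x] (h x))
    (horb2 : ∀ y, (mshift A)^[k2 y] (h.symm (mshift B y)) = (mshift A)^[l2 y] (h.symm y))
    (hcoc1 : ∀ x, (l1 x : ℤ) - (k1 x : ℤ) = 1 + (b1 x : ℤ) - (b1 (mshift A x) : ℤ))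
    (hcoc2 : ∀ y, (l2 y : ℤ) - (k2 y : ℤ) = 1 + (b2 y : ℤ) - (b2 (mshift B y) : ℤ))
    -- Lemma 3.3 of Matsumoto–Matui (which may be assumed):
    (hklp : ∀ x : MarkovShift A,
      esum (mshift B) k2 (l1 x) (h x) + esum (mshift B) l2 (k1 x) (h (mshift A x)) + 1
        = esum (mshift B) k2 (k1 x) (h (mshift A x)) + esum (mshift B) l2 (l1 x) (h x))
    -- topological transitivity: continuous shift-invariant integer functions are constant
    (htrans : ∀ F : MarkovShift A → ℤ, Continuous F →
      (∀ x, F (mshift A x) = F x) → ∃ c : ℤ, ∀ x, F x = c) :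
    ∃ Nh : ℕ, ∀ x : MarkovShift A, b1 x + b2 (h x) = Nh := by
  obtain ⟨c, hc⟩ := htrans (fun x => (b1 x : ℤ) + (b2 (h x) : ℤ))
    (Continuous.add (f := fun x => (b1 x : ℤ)) (g := fun x => (b2 (h x) : ℤ))
      (continuous_of_discreteTopology.comp hb1)
      (continuous_of_discreteTopology.comp (hb2.comp h.continuous)))
    (by
      intro x
      show (b1 (mshift A x) : ℤ) + (b2 (h (mshift A x)) : ℤ) = (b1 x : ℤ) + (b2 (h x) : ℤ)
      have t1 := esum_tele k2 l2 b2 hcoc2 (l1 x) (h x)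
      have t2 := esum_tele k2 l2 b2 hcoc2 (k1 x) (h (mshift A x))
      rw [horb1 x] at t2
      have hp := hklp x
      have h1 := hcoc1 x
      have : ((esum (mshift B) k2 (l1 x) (h x) : ℤ)
          + esum (mshift B) l2 (k1 x) (h (mshift A x)) + 1 : ℤ)
          = esum (mshift B) k2 (k1 x) (h (mshift A x)) + esum (mshift B) l2 (l1 x) (h x) := by
        exact_mod_cast congrArg (Nat.cast : ℕ → ℤ) hp
      omega)
  refine ⟨c.toNat, fun x => ?_⟩
  have := hc x
  omega
end

section
/- If the one-sided topological Markov shifts $(X_A,\sigma_A)$ and $(X_B,\sigma_B)$ are strongly continuous orbit equivalent, then the two-sided topological Markov shifts $(\bar{X}_A, \bar{\sigma}_A)$ and $(\bar{X}_B, \bar{\sigma}_B)$ are topologically conjugate: there is a homeomorphism $\bar{h}: \bar{X}_A \to \bar{X}_B$ with $\bar{h}\circ\bar{\sigma}_A = \bar{\sigma}_B\circ\bar{h}$. -/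
open Function Finset

/-- The two-sided topological Markov shift space. -/
abbrev MarkovShift2 {N : ℕ} (A : Matrix (Fin N) (Fin N) (Fin 2)) :=
  {x : ℤ → Fin N // ∀ n : ℤ, A (x n) (x (n + 1)) = 1}

/-- The two-sided shift map. -/
def mshift2 {N : ℕ} (A : Matrix (Fin N) (Fin N) (Fin 2)) :
    MarkovShift2 A → MarkovShift2 A :=
  fun x => ⟨fun n => x.1 (n + 1), fun n => x.2 (n + 1)⟩

/-- Irreducibility of a `{0,1}`-matrix: any two indices are joined by an admissible path. -/
def MatIrreducible {N : ℕ} (A : Matrix (Fin N) (Fin N) (Fin 2)) : Prop :=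
  ∀ i j : Fin N, ∃ m : ℕ, 0 < m ∧ ∃ p : ℕ → Fin N, p 0 = i ∧ p m = j ∧
    ∀ t < m, A (p t) (p (t + 1)) = 1

/-- Condition (I): non-eventually-periodic points are dense. -/
def CondI {N : ℕ} (A : Matrix (Fin N) (Fin N) (Fin 2)) : Prop :=
  Dense {x : MarkovShift A | ¬ ∃ r s : ℕ, r ≠ s ∧ (mshift A)^[r] x = (mshift A)^[s] x}

/-- Strongly continuous orbit equivalence of one-sided topological Markov shifts. -/
def SCOE {N M : ℕ} (A : Matrix (Fin N) (Fin N) (Fin 2))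
    (B : Matrix (Fin M) (Fin M) (Fin 2)) : Prop :=
  ∃ h : MarkovShift A ≃ₜ MarkovShift B,
  ∃ k1 l1 : MarkovShift A → ℕ, ∃ k2 l2 : MarkovShift B → ℕ,
  ∃ b1 : MarkovShift A → ℕ, ∃ b2 : MarkovShift B → ℕ,
    Continuous k1 ∧ Continuous l1 ∧ Continuous k2 ∧ Continuous l2 ∧
    Continuous b1 ∧ Continuous b2 ∧
    (∀ x, (mshift B)^[k1 x] (h (mshift A x)) = (mshift B)^[l1 x] (h x)) ∧
    (∀ y, (mshift A)^[k2 y] (h.symm (mshift B y)) = (mshift A)^[l2 y] (h.symm y)) ∧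
    (∀ x, (l1 x : ℤ) - (k1 x : ℤ) = 1 + (b1 x : ℤ) - (b1 (mshift A x) : ℤ)) ∧
    (∀ y, (l2 y : ℤ) - (k2 y : ℤ) = 1 + (b2 y : ℤ) - (b2 (mshift B y) : ℤ))

namespace SCOEAux

variable {N M : ℕ} {A : Matrix (Fin N) (Fin N) (Fin 2)} {B : Matrix (Fin M) (Fin M) (Fin 2)}

lemma mshift_iter (x : MarkovShift A) (m i : ℕ) :
    ((mshift A)^[m] x).1 i = x.1 (i + m) := by
  induction m generalizing x with
  | zero => rfl
  | succ m ih =>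
    rw [Function.iterate_add_apply, Function.iterate_one, ih]; rfl

lemma mext {x y : MarkovShift A} (h : ∀ i, x.1 i = y.1 i) : x = y :=
  Subtype.ext (funext h)

lemma iter_swap (f : MarkovShift A → MarkovShift A) (a b : ℕ) (z : MarkovShift A) :
    f^[a] (f^[b] z) = f^[b] (f^[a] z) := by
  rw [← Function.iterate_add_apply, ← Function.iterate_add_apply, add_comm]

instance : CompactSpace (MarkovShift A) := by
  have hcl : IsClosed {x : ℕ → Fin N | ∀ n, A (x n) (x (n + 1)) = 1} := by
    have : {x : ℕ → Fin N | ∀ n, A (x n) (x (n + 1)) = 1}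
        = ⋂ n, {x : ℕ → Fin N | A (x n) (x (n + 1)) = 1} := by
      ext x; simp
    rw [this]
    refine isClosed_iInter fun n => ?_
    have hc : Continuous fun x : ℕ → Fin N => A (x n) (x (n + 1)) := by
      have h1 : Continuous fun x : ℕ → Fin N => (x n, x (n + 1)) :=
        (continuous_apply n).prodMk (continuous_apply (n + 1))
      exact (continuous_of_discreteTopology
        (f := fun p : Fin N × Fin N => A p.1 p.2)).comp h1
    exact isClosed_eq hc continuous_const
  exact isCompact_iff_compactSpace.mp hcl.isCompact

lemma mshift_continuous : Continuous (mshift A) := by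
  refine Continuous.subtype_mk (continuous_pi fun n => ?_) _
  exact (continuous_apply (n + 1)).comp continuous_subtype_val

lemma exists_bound {X : Type*} [TopologicalSpace X] [CompactSpace X]
    (f : X → ℕ) (hf : Continuous f) : ∃ K, ∀ x, f x ≤ K := by
  have hfin : (Set.range f).Finite := (isCompact_range hf).finite_of_discrete
  rcases hfin.bddAbove with ⟨K, hK⟩
  exact ⟨K, fun x => hK ⟨x, rfl⟩⟩

lemma cont_iter {X Y : Type*} [TopologicalSpace X] [TopologicalSpace Y]
    (T : Y → Y) (hT : Continuous T) (b : X → ℕ) (hb : Continuous b)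
    (g : X → Y) (hg : Continuous g) : Continuous fun x => T^[b x] (g x) := by
  rw [continuous_iff_continuousAt]
  intro x
  have hopen : IsOpen (b ⁻¹' {b x}) := (isOpen_discrete _).preimage hb
  have hmem : b ⁻¹' {b x} ∈ nhds x := hopen.mem_nhds rfl
  have hcont : Continuous fun z => T^[b x] (g z) := (hT.iterate (b x)).comp hg
  refine hcont.continuousAt.congr ?_
  refine Filter.eventuallyEq_of_mem hmem fun z hz => ?_
  simp only [Set.mem_preimage, Set.mem_singleton_iff] at hz
  simp [hz]


section OneSided

variable (f : MarkovShift A → MarkovShift B) (g : MarkovShift B → MarkovShift A)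
variable (k1 l1 b1 : MarkovShift A → ℕ) (k2 l2 b2 : MarkovShift B → ℕ)

/-- `φ(x) = σ_B^{b1 x}(f x)`. -/
def phim (f : MarkovShift A → MarkovShift B) (b : MarkovShift A → ℕ)
    (x : MarkovShift A) : MarkovShift B := (mshift B)^[b x] (f x)

lemma step_eq
    (h1 : ∀ x, (mshift B)^[k1 x] (f (mshift A x)) = (mshift B)^[l1 x] (f x))
    (c1 : ∀ x, (l1 x : ℤ) - (k1 x : ℤ) = 1 + (b1 x : ℤ) - (b1 (mshift A x) : ℤ))
    (x : MarkovShift A) :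
    (mshift B)^[k1 x] (phim f b1 (mshift A x))
      = (mshift B)^[k1 x + 1] (phim f b1 x) := by
  have e : b1 (mshift A x) + l1 x = (k1 x + 1) + b1 x := by
    have := c1 x; omega
  calc (mshift B)^[k1 x] ((mshift B)^[b1 (mshift A x)] (f (mshift A x)))
      = (mshift B)^[b1 (mshift A x)] ((mshift B)^[k1 x] (f (mshift A x))) :=
        iter_swap _ _ _ _
    _ = (mshift B)^[b1 (mshift A x)] ((mshift B)^[l1 x] (f x)) := by rw [h1]
    _ = (mshift B)^[b1 (mshift A x) + l1 x] (f x) :=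
        (Function.iterate_add_apply _ _ _ _).symm
    _ = (mshift B)^[(k1 x + 1) + b1 x] (f x) := by rw [e]
    _ = (mshift B)^[k1 x + 1] ((mshift B)^[b1 x] (f x)) :=
        Function.iterate_add_apply _ _ _ _

lemma step_coord
    (h1 : ∀ x, (mshift B)^[k1 x] (f (mshift A x)) = (mshift B)^[l1 x] (f x))
    (c1 : ∀ x, (l1 x : ℤ) - (k1 x : ℤ) = 1 + (b1 x : ℤ) - (b1 (mshift A x) : ℤ))
    (x : MarkovShift A) (i : ℕ) (hi : k1 x ≤ i) :
    (phim f b1 (mshift A x)).1 i = (phim f b1 x).1 (i + 1) := by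
  have h := congrArg (fun z : MarkovShift B => z.1 (i - k1 x)) (step_eq f k1 l1 b1 h1 c1 x)
  simp only [mshift_iter] at h
  have e1 : i - k1 x + k1 x = i := by omega
  have e2 : i - k1 x + (k1 x + 1) = i + 1 := by omega
  rwa [e1, e2] at h

lemma iter_coord
    (h1 : ∀ x, (mshift B)^[k1 x] (f (mshift A x)) = (mshift B)^[l1 x] (f x))
    (c1 : ∀ x, (l1 x : ℤ) - (k1 x : ℤ) = 1 + (b1 x : ℤ) - (b1 (mshift A x) : ℤ))
    (K1 : ℕ) (hK1 : ∀ z, k1 z ≤ K1) :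
    ∀ (m : ℕ) (z : MarkovShift A) (i : ℕ), K1 ≤ i →
      (phim f b1 ((mshift A)^[m] z)).1 i = (phim f b1 z).1 (i + m) := by
  intro m
  induction m with
  | zero => intro z i _; rfl
  | succ m ih =>
    intro z i hi
    rw [Function.iterate_succ_apply']
    rw [step_coord f k1 l1 b1 h1 c1 _ i (le_trans (hK1 _) hi)]
    rw [ih z (i + 1) (by omega)]
    have e : i + 1 + m = i + (m + 1) := by omega
    rw [e]

lemma symm_iter
    (h2 : ∀ y, (mshift A)^[k2 y] (g (mshift B y)) = (mshift A)^[l2 y] (g y))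
    (m : ℕ) (y : MarkovShift B) :
    (mshift A)^[esum (mshift B) k2 m y] (g ((mshift B)^[m] y))
      = (mshift A)^[esum (mshift B) l2 m y] (g y) := by
  induction m with
  | zero => simp [esum]
  | succ m ih =>
    have ek : esum (mshift B) k2 (m + 1) y
        = esum (mshift B) k2 m y + k2 ((mshift B)^[m] y) := by
      simp [esum, Finset.sum_range_succ]
    have el : esum (mshift B) l2 (m + 1) y
        = l2 ((mshift B)^[m] y) + esum (mshift B) l2 m y := by
      simp [esum, Finset.sum_range_succ]; ring
    rw [ek, el]
    calc (mshift A)^[esum (mshift B) k2 m y + k2 ((mshift B)^[m] y)]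
            (g ((mshift B)^[m + 1] y))
        = (mshift A)^[esum (mshift B) k2 m y]
            ((mshift A)^[k2 ((mshift B)^[m] y)] (g (mshift B ((mshift B)^[m] y)))) := by
          rw [Function.iterate_add_apply, Function.iterate_succ_apply']
      _ = (mshift A)^[esum (mshift B) k2 m y]
            ((mshift A)^[l2 ((mshift B)^[m] y)] (g ((mshift B)^[m] y))) := by rw [h2]
      _ = (mshift A)^[l2 ((mshift B)^[m] y)]
            ((mshift A)^[esum (mshift B) k2 m y] (g ((mshift B)^[m] y))) :=
          iter_swap _ _ _ _
      _ = (mshift A)^[l2 ((mshift B)^[m] y)]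
            ((mshift A)^[esum (mshift B) l2 m y] (g y)) := by rw [ih]
      _ = (mshift A)^[l2 ((mshift B)^[m] y) + esum (mshift B) l2 m y] (g y) :=
          (Function.iterate_add_apply _ _ _ _).symm

lemma esum_cocycle
    (c2 : ∀ y, (l2 y : ℤ) - (k2 y : ℤ) = 1 + (b2 y : ℤ) - (b2 (mshift B y) : ℤ))
    (m : ℕ) (y : MarkovShift B) :
    esum (mshift B) l2 m y + b2 ((mshift B)^[m] y)
      = esum (mshift B) k2 m y + m + b2 y := by
  induction m with
  | zero => simp [esum]
  | succ m ih =>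
    have ek : esum (mshift B) k2 (m + 1) y
        = esum (mshift B) k2 m y + k2 ((mshift B)^[m] y) := by
      simp [esum, Finset.sum_range_succ]
    have el : esum (mshift B) l2 (m + 1) y
        = esum (mshift B) l2 m y + l2 ((mshift B)^[m] y) := by
      simp [esum, Finset.sum_range_succ]
    have hc := c2 ((mshift B)^[m] y)
    have hs : mshift B ((mshift B)^[m] y) = (mshift B)^[m + 1] y :=
      (Function.iterate_succ_apply' _ _ _).symm
    rw [hs] at hc
    rw [ek, el]
    omega

lemma esum_le (K2 : ℕ) (hK2 : ∀ y, k2 y ≤ K2) (m : ℕ) (y : MarkovShift B) :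
    esum (mshift B) k2 m y ≤ m * K2 := by
  induction m with
  | zero => simp [esum]
  | succ m ih =>
    have ek : esum (mshift B) k2 (m + 1) y
        = esum (mshift B) k2 m y + k2 ((mshift B)^[m] y) := by
      simp [esum, Finset.sum_range_succ]
    have := hK2 ((mshift B)^[m] y)
    rw [ek]
    calc esum (mshift B) k2 m y + k2 ((mshift B)^[m] y) ≤ m * K2 + K2 := by omega
      _ = (m + 1) * K2 := by ring

lemma grand
    (h2 : ∀ y, (mshift A)^[k2 y] (g (mshift B y)) = (mshift A)^[l2 y] (g y))
    (c2 : ∀ y, (l2 y : ℤ) - (k2 y : ℤ) = 1 + (b2 y : ℤ) - (b2 (mshift B y) : ℤ))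
    (hgf : ∀ x, g (f x) = x) (x : MarkovShift A) :
    (mshift A)^[esum (mshift B) k2 (b1 x) (f x)] (phim g b2 (phim f b1 x))
      = (mshift A)^[esum (mshift B) k2 (b1 x) (f x) + (b1 x + b2 (f x))] x := by
  have key : phim g b2 (phim f b1 x)
      = (mshift A)^[b2 ((mshift B)^[b1 x] (f x))] (g ((mshift B)^[b1 x] (f x))) := rfl
  rw [key]
  calc (mshift A)^[esum (mshift B) k2 (b1 x) (f x)]
          ((mshift A)^[b2 ((mshift B)^[b1 x] (f x))] (g ((mshift B)^[b1 x] (f x))))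
      = (mshift A)^[b2 ((mshift B)^[b1 x] (f x))]
          ((mshift A)^[esum (mshift B) k2 (b1 x) (f x)] (g ((mshift B)^[b1 x] (f x)))) :=
        iter_swap _ _ _ _
    _ = (mshift A)^[b2 ((mshift B)^[b1 x] (f x))]
          ((mshift A)^[esum (mshift B) l2 (b1 x) (f x)] (g (f x))) := by
        rw [symm_iter g k2 l2 h2 (b1 x) (f x)]
    _ = (mshift A)^[b2 ((mshift B)^[b1 x] (f x)) + esum (mshift B) l2 (b1 x) (f x)] x := by
        rw [hgf]; exact (Function.iterate_add_apply _ _ _ _).symm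
    _ = (mshift A)^[esum (mshift B) k2 (b1 x) (f x) + (b1 x + b2 (f x))] x := by
        have := esum_cocycle k2 l2 b2 c2 (b1 x) (f x)
        congr 1
        omega

lemma grand_coord
    (h2 : ∀ y, (mshift A)^[k2 y] (g (mshift B y)) = (mshift A)^[l2 y] (g y))
    (c2 : ∀ y, (l2 y : ℤ) - (k2 y : ℤ) = 1 + (b2 y : ℤ) - (b2 (mshift B y) : ℤ))
    (hgf : ∀ x, g (f x) = x)
    (Cb : ℕ) (hCb : ∀ x, esum (mshift B) k2 (b1 x) (f x) ≤ Cb)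
    (Nc : ℕ) (hNc : ∀ x, b1 x + b2 (f x) = Nc)
    (x : MarkovShift A) (i : ℕ) (hi : Cb ≤ i) :
    (phim g b2 (phim f b1 x)).1 i = x.1 (i + Nc) := by
  have h := congrArg
    (fun z : MarkovShift A => z.1 (i - esum (mshift B) k2 (b1 x) (f x)))
    (grand f g b1 k2 l2 b2 h2 c2 hgf x)
  simp only [mshift_iter] at h
  have hP := hCb x
  have e1 : i - esum (mshift B) k2 (b1 x) (f x) + esum (mshift B) k2 (b1 x) (f x) = i := by
    omega
  have e2 : i - esum (mshift B) k2 (b1 x) (f x)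
      + (esum (mshift B) k2 (b1 x) (f x) + (b1 x + b2 (f x))) = i + Nc := by
    have := hNc x; omega
  rwa [e1, e2] at h

lemma iter_collapse (p q : ℕ) (w : MarkovShift A) :
    (mshift A)^[p] ((mshift A)^[q] w) = (mshift A)^[p + q] w :=
  (Function.iterate_add_apply _ _ _ _).symm

lemma c_inv
    (h1 : ∀ x, (mshift B)^[k1 x] (f (mshift A x)) = (mshift B)^[l1 x] (f x))
    (h2 : ∀ y, (mshift A)^[k2 y] (g (mshift B y)) = (mshift A)^[l2 y] (g y))
    (c1 : ∀ x, (l1 x : ℤ) - (k1 x : ℤ) = 1 + (b1 x : ℤ) - (b1 (mshift A x) : ℤ))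
    (c2 : ∀ y, (l2 y : ℤ) - (k2 y : ℤ) = 1 + (b2 y : ℤ) - (b2 (mshift B y) : ℤ))
    (hgf : ∀ x, g (f x) = x) (x : MarkovShift A)
    (hx : ¬ ∃ r s : ℕ, r ≠ s ∧ (mshift A)^[r] x = (mshift A)^[s] x) :
    b1 (mshift A x) + b2 (f (mshift A x)) = b1 x + b2 (f x) := by
  set u := phim f b1 (mshift A x) with hu
  set v := phim f b1 x with hv
  set K := k1 x with hK
  have emid : (mshift B)^[K] u = (mshift B)^[K + 1] v := step_eq f k1 l1 b1 h1 c1 x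
  set a := esum (mshift B) k2 K u with ha
  set a' := esum (mshift B) l2 K u with ha'
  set b := esum (mshift B) k2 (K + 1) v with hb
  set b' := esum (mshift B) l2 (K + 1) v with hb'
  have e1 : (mshift A)^[a] (g ((mshift B)^[K] u)) = (mshift A)^[a'] (g u) :=
    symm_iter g k2 l2 h2 K u
  have e2 : (mshift A)^[b] (g ((mshift B)^[K + 1] v)) = (mshift A)^[b'] (g v) :=
    symm_iter g k2 l2 h2 (K + 1) v
  have Emid2 : (mshift A)^[b + a'] (g u) = (mshift A)^[a + b'] (g v) := by
    calc (mshift A)^[b + a'] (g u)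
        = (mshift A)^[b] ((mshift A)^[a'] (g u)) := Function.iterate_add_apply _ _ _ _
      _ = (mshift A)^[b] ((mshift A)^[a] (g ((mshift B)^[K] u))) := by rw [e1]
      _ = (mshift A)^[a] ((mshift A)^[b] (g ((mshift B)^[K] u))) := iter_swap _ _ _ _
      _ = (mshift A)^[a] ((mshift A)^[b] (g ((mshift B)^[K + 1] v))) := by rw [emid]
      _ = (mshift A)^[a] ((mshift A)^[b'] (g v)) := by rw [e2]
      _ = (mshift A)^[a + b'] (g v) := iter_collapse _ _ _
  set α := b2 v + (b + a') with hα
  set β := b2 u + (a + b') with hβ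
  have E2 : (mshift A)^[α] (phim g b2 u) = (mshift A)^[β] (phim g b2 v) := by
    have lu : phim g b2 u = (mshift A)^[b2 u] (g u) := rfl
    have lv : phim g b2 v = (mshift A)^[b2 v] (g v) := rfl
    rw [lu, lv, iter_collapse, iter_collapse]
    have eα : α + b2 u = (b2 v + b2 u) + (b + a') := by omega
    have eβ : β + b2 v = (b2 v + b2 u) + (a + b') := by omega
    rw [eα, eβ, ← iter_collapse (b2 v + b2 u) (b + a'), ← iter_collapse (b2 v + b2 u) (a + b'),
      Emid2]
  set P1 := esum (mshift B) k2 (b1 (mshift A x)) (f (mshift A x)) with hP1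
  set P2 := esum (mshift B) k2 (b1 x) (f x) with hP2
  set cS := b1 (mshift A x) + b2 (f (mshift A x)) with hcS
  set cX := b1 x + b2 (f x) with hcX
  have G1 : (mshift A)^[P1] (phim g b2 u) = (mshift A)^[P1 + cS] (mshift A x) :=
    grand f g b1 k2 l2 b2 h2 c2 hgf (mshift A x)
  have G2 : (mshift A)^[P2] (phim g b2 v) = (mshift A)^[P2 + cX] x :=
    grand f g b1 k2 l2 b2 h2 c2 hgf x
  have E3 : (mshift A)^[(P2 + P1) + α] (phim g b2 u)
      = (mshift A)^[(P2 + P1) + β] (phim g b2 v) := by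
    rw [← iter_collapse (P2 + P1) α, ← iter_collapse (P2 + P1) β, E2]
  have L : (mshift A)^[(P2 + P1) + α] (phim g b2 u)
      = (mshift A)^[((P2 + α) + (P1 + cS)) + 1] x := by
    have e : (P2 + P1) + α = (P2 + α) + P1 := by omega
    rw [e, ← iter_collapse (P2 + α) P1, G1, iter_collapse]
    have : mshift A x = (mshift A)^[1] x := rfl
    rw [this, iter_collapse]
  have R : (mshift A)^[(P2 + P1) + β] (phim g b2 v)
      = (mshift A)^[(P1 + β) + (P2 + cX)] x := by
    have e : (P2 + P1) + β = (P1 + β) + P2 := by omega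
    rw [e, ← iter_collapse (P1 + β) P2, G2, iter_collapse]
  have key : (mshift A)^[((P2 + α) + (P1 + cS)) + 1] x
      = (mshift A)^[(P1 + β) + (P2 + cX)] x := by rw [← L, E3, R]
  have hexp : ((P2 + α) + (P1 + cS)) + 1 = (P1 + β) + (P2 + cX) := by
    by_contra hne
    exact hx ⟨_, _, hne, key⟩
  have ac1 : a' + b2 ((mshift B)^[K] u) = a + K + b2 u :=
    esum_cocycle k2 l2 b2 c2 K u
  have ac2 : b' + b2 ((mshift B)^[K + 1] v) = b + (K + 1) + b2 v :=
    esum_cocycle k2 l2 b2 c2 (K + 1) v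
  have acm : b2 ((mshift B)^[K] u) = b2 ((mshift B)^[K + 1] v) := congrArg b2 emid
  omega

end OneSided

section Clopen

lemma clopen_cylinder (U : Set (MarkovShift A)) (hU : IsClopen U) :
    ∃ L, ∀ x y : MarkovShift A, (∀ i < L, x.1 i = y.1 i) → (x ∈ U ↔ y ∈ U) := by
  by_contra hcon
  push_neg at hcon
  set D : Set (MarkovShift A × MarkovShift A) := {p | p.1 ∈ U ↔ p.2 ∈ U} with hD
  have hDopen : IsOpen D := by
    have : D = (U ×ˢ U) ∪ (Uᶜ ×ˢ Uᶜ) := by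
      ext p
      by_cases h1 : p.1 ∈ U <;> by_cases h2 : p.2 ∈ U <;> simp [hD, h1, h2]
    rw [this]
    exact (hU.2.prod hU.2).union (hU.1.isOpen_compl.prod hU.1.isOpen_compl)
  set W : ℕ → Set (MarkovShift A × MarkovShift A) :=
    fun n => {p | ∀ i < n, p.1.1 i = p.2.1 i} ∩ Dᶜ with hW
  have hWclosed : ∀ n, IsClosed (W n) := by
    intro n
    refine IsClosed.inter ?_ hDopen.isClosed_compl
    have : {p : MarkovShift A × MarkovShift A | ∀ i < n, p.1.1 i = p.2.1 i}
        = ⋂ i, ⋂ (_ : i < n), {p : MarkovShift A × MarkovShift A | p.1.1 i = p.2.1 i} := by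
      ext p; simp
    rw [this]
    refine isClosed_iInter fun i => isClosed_iInter fun _ => isClosed_eq ?_ ?_
    · exact (continuous_apply i).comp (continuous_subtype_val.comp continuous_fst)
    · exact (continuous_apply i).comp (continuous_subtype_val.comp continuous_snd)
  have hWne : ∀ n, (W n).Nonempty := by
    intro n
    obtain ⟨x, y, hagree, hneq⟩ := hcon n
    refine ⟨(x, y), hagree, fun hmem => ?_⟩
    have : x ∈ U ↔ y ∈ U := hmem
    tauto
  have hWdir : Directed (fun s t => s ⊇ t) W := by
    intro m n
    refine ⟨max m n, ?_, ?_⟩ <;>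
      · intro p hp
        exact ⟨fun i hi => hp.1 i (lt_of_lt_of_le hi (by omega)), hp.2⟩
  obtain ⟨p, hp⟩ := IsCompact.nonempty_iInter_of_directed_nonempty_isCompact_isClosed
    W hWdir hWne (fun n => (hWclosed n).isCompact) hWclosed
  simp only [Set.mem_iInter] at hp
  have hpe : p.1 = p.2 := mext fun i => (hp (i + 1)).1 i (by omega)
  exact (hp 0).2 (by rw [hD, Set.mem_setOf_eq, hpe])

lemma iterate_mem_iff (U : Set (MarkovShift A)) (hinv : ∀ x, mshift A x ∈ U ↔ x ∈ U)
    (t : ℕ) (w : MarkovShift A) : (mshift A)^[t] w ∈ U ↔ w ∈ U := by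
  induction t with
  | zero => rfl
  | succ t ih => rw [Function.iterate_succ_apply', hinv, ih]

lemma clopen_invariant (hirr : MatIrreducible A) (U : Set (MarkovShift A))
    (hU : IsClopen U) (hinv : ∀ x, mshift A x ∈ U ↔ x ∈ U) (hne : U.Nonempty) :
    U = Set.univ := by
  obtain ⟨L, hL⟩ := clopen_cylinder U hU
  obtain ⟨x, hx⟩ := hne
  rw [Set.eq_univ_iff_forall]
  intro z
  rcases Nat.eq_zero_or_pos L with hL0 | hLpos
  · exact (hL x z (fun i hi => by omega)).mp hx
  · obtain ⟨m, hm, p, hp0, hpm, hpadm⟩ := hirr (z.1 (L - 1)) (x.1 0)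
    set w : ℕ → Fin N := fun i =>
      if i < L then z.1 i
      else if i < L - 1 + m then p (i - (L - 1))
      else x.1 (i - (L - 1 + m)) with hw
    have claim1 : ∀ i, L - 1 ≤ i → i ≤ L - 1 + m → w i = p (i - (L - 1)) := by
      intro i h1 h2
      by_cases hi : i < L
      · have hieq : i = L - 1 := by omega
        have e0 : i - (L - 1) = 0 := by omega
        show (if i < L then z.1 i else if i < L - 1 + m then p (i - (L - 1))
          else x.1 (i - (L - 1 + m))) = p (i - (L - 1))
        rw [if_pos hi, e0, hp0, hieq]
      · by_cases hi2 : i < L - 1 + m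
        · show (if i < L then z.1 i else if i < L - 1 + m then p (i - (L - 1))
            else x.1 (i - (L - 1 + m))) = p (i - (L - 1))
          rw [if_neg hi, if_pos hi2]
        · have hieq : i = L - 1 + m := by omega
          have e0 : i - (L - 1 + m) = 0 := by omega
          have e1 : i - (L - 1) = m := by omega
          show (if i < L then z.1 i else if i < L - 1 + m then p (i - (L - 1))
            else x.1 (i - (L - 1 + m))) = p (i - (L - 1))
          rw [if_neg hi, if_neg hi2, e0, e1, hpm]
    have claim2 : ∀ i, L - 1 + m ≤ i → w i = x.1 (i - (L - 1 + m)) := by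
      intro i h1
      have hi : ¬ i < L := by omega
      have hi2 : ¬ i < L - 1 + m := by omega
      show (if i < L then z.1 i else if i < L - 1 + m then p (i - (L - 1))
        else x.1 (i - (L - 1 + m))) = x.1 (i - (L - 1 + m))
      rw [if_neg hi, if_neg hi2]
    have hwadm : ∀ n, A (w n) (w (n + 1)) = 1 := by
      intro n
      by_cases h1 : n + 1 < L
      · have e1 : w n = z.1 n := by
          show (if n < L then z.1 n else _) = z.1 n
          rw [if_pos (by omega : n < L)]
        have e2 : w (n + 1) = z.1 (n + 1) := by
          show (if n + 1 < L then z.1 (n + 1) else _) = z.1 (n + 1)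
          rw [if_pos h1]
        rw [e1, e2]; exact z.2 n
      · by_cases h2 : n < L - 1 + m
        · have e1 : w n = p (n - (L - 1)) := claim1 n (by omega) (by omega)
          have e2 : w (n + 1) = p (n - (L - 1) + 1) := by
            rw [claim1 (n + 1) (by omega) (by omega)]
            have e3 : n + 1 - (L - 1) = n - (L - 1) + 1 := by omega
            rw [e3]
          rw [e1, e2]
          exact hpadm (n - (L - 1)) (by omega)
        · have e1 : w n = x.1 (n - (L - 1 + m)) := claim2 n (by omega)
          have e2 : w (n + 1) = x.1 (n - (L - 1 + m) + 1) := by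
            rw [claim2 (n + 1) (by omega)]
            have e3 : n + 1 - (L - 1 + m) = n - (L - 1 + m) + 1 := by omega
            rw [e3]
          rw [e1, e2]
          exact x.2 (n - (L - 1 + m))
    set Wp : MarkovShift A := ⟨w, hwadm⟩ with hWp
    have hWx : (mshift A)^[L - 1 + m] Wp = x := by
      refine mext fun i => ?_
      rw [mshift_iter]
      show w (i + (L - 1 + m)) = x.1 i
      rw [claim2 (i + (L - 1 + m)) (by omega)]
      have e3 : i + (L - 1 + m) - (L - 1 + m) = i := by omega
      rw [e3]
    have hWU : Wp ∈ U := by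
      rw [← iterate_mem_iff U hinv (L - 1 + m) Wp, hWx]
      exact hx
    refine (hL Wp z fun i hi => ?_).mp hWU
    rw [hWp]
    show w i = z.1 i
    rw [hw]; simp only [if_pos hi]

end Clopen

section TwoSided

lemma mext2 {x y : MarkovShift2 A} (h : ∀ i, x.1 i = y.1 i) : x = y :=
  Subtype.ext (funext h)

/-- The tail of a two-sided point starting at position `k`. -/
def tail (x : MarkovShift2 A) (k : ℤ) : MarkovShift A :=
  ⟨fun m => x.1 (k + m), by
    intro n
    have h := x.2 (k + n)
    have e : k + ((n + 1 : ℕ) : ℤ) = (k + n) + 1 := by push_cast; ring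
    show A (x.1 (k + (n : ℤ))) (x.1 (k + ((n + 1 : ℕ) : ℤ))) = 1
    rw [e]
    exact h⟩

lemma tail_val (x : MarkovShift2 A) (k : ℤ) (m : ℕ) : (tail x k).1 m = x.1 (k + m) := rfl

lemma tail_iterate (x : MarkovShift2 A) (k : ℤ) (m : ℕ) :
    (mshift A)^[m] (tail x k) = tail x (k + m) := by
  refine mext fun i => ?_
  rw [mshift_iter, tail_val, tail_val]
  congr 1
  push_cast
  ring

/-- Translation by `t` on the two-sided shift space. -/
def shiftBy (t : ℤ) (x : MarkovShift2 A) : MarkovShift2 A :=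
  ⟨fun n => x.1 (n + t), by
    intro n
    have h := x.2 (n + t)
    have e : (n + t) + 1 = (n + 1) + t := by ring
    rw [e] at h
    exact h⟩

lemma shiftBy_val (t : ℤ) (x : MarkovShift2 A) (n : ℤ) : (shiftBy t x).1 n = x.1 (n + t) := rfl

lemma shiftBy_shiftBy (t s : ℤ) (x : MarkovShift2 A) :
    shiftBy t (shiftBy s x) = shiftBy (t + s) x := by
  refine mext2 fun n => ?_
  rw [shiftBy_val, shiftBy_val, shiftBy_val]
  congr 1
  ring

lemma shiftBy_continuous (t : ℤ) : Continuous (shiftBy (A := A) t) := by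
  refine Continuous.subtype_mk (continuous_pi fun n => ?_) _
  exact (continuous_apply (n + t)).comp continuous_subtype_val

lemma tail_shiftBy (x : MarkovShift2 A) (t k : ℤ) :
    tail (shiftBy t x) k = tail x (k + t) := by
  refine mext fun m => ?_
  rw [tail_val, shiftBy_val, tail_val]
  congr 1
  ring

lemma tail_mshift2 (x : MarkovShift2 A) (k : ℤ) :
    tail (mshift2 A x) k = tail x (k + 1) := by
  refine mext fun m => ?_
  show x.1 ((k + m) + 1) = x.1 ((k + 1) + m)
  congr 1
  ring

/-- Auxiliary coordinate function for the two-sided map. -/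
def barVal (φ : MarkovShift A → MarkovShift B) (K1 : ℕ) (x : MarkovShift2 A) (n : ℤ) :
    Fin M := (φ (tail x (n - K1))).1 K1

lemma barVal_stable (φ : MarkovShift A → MarkovShift B) (K1 : ℕ)
    (hφ : ∀ (z : MarkovShift A) (m i : ℕ), K1 ≤ i →
      (φ ((mshift A)^[m] z)).1 i = (φ z).1 (i + m))
    (x : MarkovShift2 A) (n k : ℤ) (hk : k ≤ n - K1) :
    (φ (tail x k)).1 ((n - k).toNat) = barVal φ K1 x n := by
  have h1 : tail x (n - K1) = (mshift A)^[((n - K1) - k).toNat] (tail x k) := by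
    rw [tail_iterate]
    congr 1
    omega
  show (φ (tail x k)).1 ((n - k).toNat) = (φ (tail x (n - K1))).1 K1
  rw [h1, hφ _ _ _ le_rfl]
  have e : K1 + ((n - K1) - k).toNat = (n - k).toNat := by omega
  rw [e]

/-- The induced map on two-sided shift spaces. -/
def barMap (φ : MarkovShift A → MarkovShift B) (K1 : ℕ)
    (hφ : ∀ (z : MarkovShift A) (m i : ℕ), K1 ≤ i →
      (φ ((mshift A)^[m] z)).1 i = (φ z).1 (i + m))
    (x : MarkovShift2 A) : MarkovShift2 B :=
  ⟨fun n => barVal φ K1 x n, by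
    intro n
    show B (barVal φ K1 x n) (barVal φ K1 x (n + 1)) = 1
    have h1 : barVal φ K1 x (n + 1) = (φ (tail x (n - K1))).1 (K1 + 1) := by
      rw [← barVal_stable φ K1 hφ x (n + 1) (n - K1) (by omega)]
      have e : ((n + 1) - (n - (K1 : ℤ))).toNat = K1 + 1 := by omega
      rw [e]
    rw [h1]
    exact (φ (tail x (n - K1))).2 K1⟩

lemma barMap_val (φ : MarkovShift A → MarkovShift B) (K1 : ℕ)
    (hφ : ∀ (z : MarkovShift A) (m i : ℕ), K1 ≤ i →
      (φ ((mshift A)^[m] z)).1 i = (φ z).1 (i + m))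
    (x : MarkovShift2 A) (n : ℤ) :
    (barMap φ K1 hφ x).1 n = (φ (tail x (n - K1))).1 K1 := rfl

lemma barMap_shift (φ : MarkovShift A → MarkovShift B) (K1 : ℕ)
    (hφ : ∀ (z : MarkovShift A) (m i : ℕ), K1 ≤ i →
      (φ ((mshift A)^[m] z)).1 i = (φ z).1 (i + m))
    (x : MarkovShift2 A) :
    barMap φ K1 hφ (mshift2 A x) = mshift2 B (barMap φ K1 hφ x) := by
  refine mext2 fun n => ?_
  show (φ (tail (mshift2 A x) (n - K1))).1 K1 = (φ (tail x ((n + 1) - K1))).1 K1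
  rw [tail_mshift2]
  have e : (n - K1) + 1 = (n + 1) - K1 := by ring
  rw [e]

lemma barMap_shiftBy (φ : MarkovShift A → MarkovShift B) (K1 : ℕ)
    (hφ : ∀ (z : MarkovShift A) (m i : ℕ), K1 ≤ i →
      (φ ((mshift A)^[m] z)).1 i = (φ z).1 (i + m))
    (t : ℤ) (x : MarkovShift2 A) :
    barMap φ K1 hφ (shiftBy t x) = shiftBy t (barMap φ K1 hφ x) := by
  refine mext2 fun n => ?_
  show (φ (tail (shiftBy t x) (n - K1))).1 K1 = (φ (tail x ((n + t) - K1))).1 K1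
  rw [tail_shiftBy]
  have e : (n - K1) + t = (n + t) - K1 := by ring
  rw [e]

lemma barMap_continuous (φ : MarkovShift A → MarkovShift B) (K1 : ℕ)
    (hφ : ∀ (z : MarkovShift A) (m i : ℕ), K1 ≤ i →
      (φ ((mshift A)^[m] z)).1 i = (φ z).1 (i + m))
    (hφc : Continuous φ) : Continuous (barMap φ K1 hφ) := by
  refine Continuous.subtype_mk (continuous_pi fun n => ?_) _
  have htail : Continuous fun x : MarkovShift2 A => tail x (n - K1) := by
    refine Continuous.subtype_mk (continuous_pi fun m => ?_) _
    exact (continuous_apply _).comp continuous_subtype_val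
  exact (continuous_apply K1).comp (continuous_subtype_val.comp (hφc.comp htail))

lemma tail_barMap (φ : MarkovShift A → MarkovShift B) (K1 : ℕ)
    (hφ : ∀ (z : MarkovShift A) (m i : ℕ), K1 ≤ i →
      (φ ((mshift A)^[m] z)).1 i = (φ z).1 (i + m))
    (x : MarkovShift2 A) (j : ℤ) (d : ℕ) (hd : K1 ≤ d) :
    tail (barMap φ K1 hφ x) j = (mshift B)^[d] (φ (tail x (j - d))) := by
  refine mext fun m => ?_
  rw [tail_val, mshift_iter]
  show barVal φ K1 x (j + m) = (φ (tail x (j - d))).1 (m + d)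
  rw [← barVal_stable φ K1 hφ x (j + m) (j - d) (by omega)]
  have e : ((j + m) - (j - d)).toNat = m + d := by omega
  rw [e]

end TwoSided

end SCOEAux

open SCOEAux

/-- strongly continuous orbit equivalence of the one-sided Markov shifts
implies topological conjugacy of the two-sided Markov shifts. -/
theorem scoe_implies_two_sided_conjugacy {N M : ℕ}
    (A : Matrix (Fin N) (Fin N) (Fin 2)) (B : Matrix (Fin M) (Fin M) (Fin 2))
    (hirrA : MatIrreducible A) (hirrB : MatIrreducible B)
    (hIA : CondI A) (hIB : CondI B)
    (hscoe : SCOE A B) :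
    ∃ hbar : MarkovShift2 A ≃ₜ MarkovShift2 B,
      ∀ x : MarkovShift2 A, hbar (mshift2 A x) = mshift2 B (hbar x) := by
  classical
  obtain ⟨h, k1, l1, k2, l2, b1, b2, hk1c, hl1c, hk2c, hl2c, hb1c, hb2c, h1, h2, c1, c2⟩ :=
    hscoe
  by_cases hemptyQ : IsEmpty (MarkovShift A)
  · have hB : IsEmpty (MarkovShift B) := ⟨fun y => hemptyQ.false (h.symm y)⟩
    have hA2 : IsEmpty (MarkovShift2 A) := ⟨fun x => hemptyQ.false (tail x 0)⟩
    have hB2 : IsEmpty (MarkovShift2 B) := ⟨fun y => hB.false (tail y 0)⟩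
    refine ⟨⟨@Equiv.equivOfIsEmpty _ _ hA2 hB2, ?_, ?_⟩, fun x => (hA2.false x).elim⟩
    · rw [continuous_iff_continuousAt]; intro x; exact (hA2.false x).elim
    · rw [continuous_iff_continuousAt]; intro y; exact (hB2.false y).elim
  · rw [not_isEmpty_iff] at hemptyQ
    obtain ⟨x0⟩ := hemptyQ
    obtain ⟨K1, hK1⟩ := exists_bound k1 hk1c
    obtain ⟨K2, hK2⟩ := exists_bound k2 hk2c
    obtain ⟨B1, hB1⟩ := exists_bound b1 hb1c
    obtain ⟨B2, hB2⟩ := exists_bound b2 hb2c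
    have hgf : ∀ x, h.symm (h x) = x := h.symm_apply_apply
    have hfg : ∀ y, h (h.symm y) = y := h.apply_symm_apply
    have hadd : Continuous fun p : ℕ × ℕ => p.1 + p.2 := continuous_of_discreteTopology
    have hccont : Continuous fun x => b1 x + b2 (h x) :=
      hadd.comp (hb1c.prodMk (hb2c.comp h.continuous))
    have hcinv : ∀ x, b1 (mshift A x) + b2 (h (mshift A x)) = b1 x + b2 (h x) := by
      have heq : (fun x => b1 (mshift A x) + b2 (h (mshift A x)))
          = fun x => b1 x + b2 (h x) := by
        refine Continuous.ext_on hIA (hccont.comp mshift_continuous) hccont ?_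
        intro x hx
        exact c_inv (⇑h) (⇑h.symm) k1 l1 b1 k2 l2 b2 h1 h2 c1 c2 hgf x hx
      exact fun x => congrFun heq x
    set Nc := b1 x0 + b2 (h x0) with hNcdef
    have hNc : ∀ x, b1 x + b2 (h x) = Nc := by
      have hU : IsClopen ((fun x => b1 x + b2 (h x)) ⁻¹' {Nc}) :=
        ⟨(isClosed_discrete _).preimage hccont, (isOpen_discrete _).preimage hccont⟩
      have huniv := clopen_invariant hirrA _ hU (fun x => by
        simp only [Set.mem_preimage, Set.mem_singleton_iff]
        rw [hcinv x]) ⟨x0, rfl⟩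
      intro x
      have : x ∈ ((fun x => b1 x + b2 (h x)) ⁻¹' {Nc}) := by rw [huniv]; trivial
      simpa using this
    have hNc' : ∀ y, b2 y + b1 (h.symm y) = Nc := by
      intro y
      have := hNc (h.symm y)
      rw [hfg] at this
      omega
    -- iterated intertwining data
    have hφ0 := iter_coord (⇑h) k1 l1 b1 h1 c1 K1 hK1
    have hψ0 := iter_coord (⇑h.symm) k2 l2 b2 h2 c2 K2 hK2
    have hφ' : ∀ (z : MarkovShift A) (m i : ℕ), K1 ≤ i →
        (phim (⇑h) b1 ((mshift A)^[m] z)).1 i = (phim (⇑h) b1 z).1 (i + m) :=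
      fun z m i hi => hφ0 m z i hi
    have hψ' : ∀ (z : MarkovShift B) (m i : ℕ), K2 ≤ i →
        (phim (⇑h.symm) b2 ((mshift B)^[m] z)).1 i = (phim (⇑h.symm) b2 z).1 (i + m) :=
      fun z m i hi => hψ0 m z i hi
    -- bounds for the grand formula
    have hCb : ∀ x, esum (mshift B) k2 (b1 x) (h x) ≤ B1 * K2 := by
      intro x
      calc esum (mshift B) k2 (b1 x) (h x) ≤ b1 x * K2 := esum_le k2 K2 hK2 (b1 x) (h x)
        _ ≤ B1 * K2 := Nat.mul_le_mul_right K2 (hB1 x)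
    have hCb' : ∀ y, esum (mshift A) k1 (b2 y) (h.symm y) ≤ B2 * K1 := by
      intro y
      calc esum (mshift A) k1 (b2 y) (h.symm y) ≤ b2 y * K1 :=
          esum_le k1 K1 hK1 (b2 y) (h.symm y)
        _ ≤ B2 * K1 := Nat.mul_le_mul_right K1 (hB2 y)
    have hGC1 : ∀ (x : MarkovShift A) (i : ℕ), B1 * K2 ≤ i →
        (phim (⇑h.symm) b2 (phim (⇑h) b1 x)).1 i = x.1 (i + Nc) :=
      fun x i hi => grand_coord (⇑h) (⇑h.symm) b1 k2 l2 b2 h2 c2 hgf (B1 * K2) hCb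
        Nc hNc x i hi
    have hGC2 : ∀ (y : MarkovShift B) (i : ℕ), B2 * K1 ≤ i →
        (phim (⇑h) b1 (phim (⇑h.symm) b2 y)).1 i = y.1 (i + Nc) :=
      fun y i hi => grand_coord (⇑h.symm) (⇑h) b2 k1 l1 b1 h1 c1 hfg (B2 * K1) hCb'
        Nc hNc' y i hi
    -- continuity of the one-sided maps
    have hφcont : Continuous (phim (⇑h) b1) := by
      show Continuous fun x => (mshift B)^[b1 x] (h x)
      exact cont_iter (mshift B) mshift_continuous b1 hb1c (⇑h) h.continuous
    have hψcont : Continuous (phim (⇑h.symm) b2) := by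
      show Continuous fun y => (mshift A)^[b2 y] (h.symm y)
      exact cont_iter (mshift A) mshift_continuous b2 hb2c (⇑h.symm) h.symm.continuous
    -- the two-sided maps
    set F := barMap (phim (⇑h) b1) K1 hφ' with hF
    set G := barMap (phim (⇑h.symm) b2) K2 hψ' with hG
    have compGF : ∀ (x : MarkovShift2 A) (n : ℤ), (G (F x)).1 n = x.1 (n + Nc) := by
      intro x n
      have ht : tail (F x) (n - K2)
          = (mshift B)^[K1 + B1 * K2]
              (phim (⇑h) b1 (tail x ((n - K2) - (K1 + B1 * K2)))) :=
        tail_barMap (phim (⇑h) b1) K1 hφ' x (n - K2) (K1 + B1 * K2) (by omega)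
      rw [hG, barMap_val, ht, hψ' _ _ _ le_rfl,
        hGC1 _ _ (by omega), tail_val]
      congr 1
      push_cast
      ring
    have compFG : ∀ (y : MarkovShift2 B) (n : ℤ), (F (G y)).1 n = y.1 (n + Nc) := by
      intro y n
      have ht : tail (G y) (n - K1)
          = (mshift A)^[K2 + B2 * K1]
              (phim (⇑h.symm) b2 (tail y ((n - K1) - (K2 + B2 * K1)))) :=
        tail_barMap (phim (⇑h.symm) b2) K2 hψ' y (n - K1) (K2 + B2 * K1) (by omega)
      rw [hF, barMap_val, ht, hφ' _ _ _ le_rfl,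
        hGC2 _ _ (by omega), tail_val]
      congr 1
      push_cast
      ring
    have eGF : ∀ x, G (F x) = shiftBy (Nc : ℤ) x := by
      intro x
      refine mext2 fun n => ?_
      rw [compGF, shiftBy_val]
    have eFG : ∀ y, F (G y) = shiftBy (Nc : ℤ) y := by
      intro y
      refine mext2 fun n => ?_
      rw [compFG, shiftBy_val]
    have hzero : ∀ (x : MarkovShift2 A), shiftBy (0 : ℤ) x = x := by
      intro x
      refine mext2 fun n => ?_
      rw [shiftBy_val, add_zero]
    have hzero' : ∀ (y : MarkovShift2 B), shiftBy (0 : ℤ) y = y := by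
      intro y
      refine mext2 fun n => ?_
      rw [shiftBy_val, add_zero]
    refine ⟨⟨⟨F, fun y => shiftBy (-(Nc : ℤ)) (G y), ?_, ?_⟩, ?_, ?_⟩,
      fun x => barMap_shift (phim (⇑h) b1) K1 hφ' x⟩
    · intro x
      show shiftBy (-(Nc : ℤ)) (G (F x)) = x
      rw [eGF, shiftBy_shiftBy]
      have e : (-(Nc : ℤ)) + Nc = 0 := by ring
      rw [e, hzero]
    · intro y
      show F (shiftBy (-(Nc : ℤ)) (G y)) = y
      rw [hF, barMap_shiftBy, ← hF, eFG, shiftBy_shiftBy]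
      have e : (-(Nc : ℤ)) + Nc = 0 := by ring
      rw [e, hzero']
    · exact barMap_continuous (phim (⇑h) b1) K1 hφ' hφcont
    · exact (shiftBy_continuous (-(Nc : ℤ))).comp
        (barMap_continuous (phim (⇑h.symm) b2) K2 hψ' hψcont)
end

section
/- Under strongly continuous orbit equivalence data $h, b_1, b_2$ with $\varphi_{b_1}(x) = \sigma_B^{b_1(x)}(h(x))$ and $\psi_{b_2}(y) = \sigma_A^{b_2(y)}(h^{-1}(y))$, and with $b_1(x) + b_2(h(x)) = N_h$ constant, one has $\psi_{b_2}(\varphi_{b_1}(x)) = \sigma_A^{N_h}(x)$ for all $x \in X_A$ and $\varphi_{b_1}(\psi_{b_2}(y)) = \sigma_B^{N_h}(y)$ for all $y \in X_B$. In particular each one-sided shift is a factor of the other. -/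
open Function Finset

/-- with `φ_{b_1}(x) = σ_B^{b_1(x)}(h x)`, `ψ_{b_2}(y) = σ_A^{b_2(y)}(h⁻¹ y)`
and `b_1(x) + b_2(h(x)) = N_h` constant, one has `ψ_{b_2} ∘ φ_{b_1} = σ_A^{N_h}` and
`φ_{b_1} ∘ ψ_{b_2} = σ_B^{N_h}`; in particular each one-sided shift is a factor of the
other. -/
theorem psi_phi_eq_power {N M : ℕ}
    (A : Matrix (Fin N) (Fin N) (Fin 2)) (B : Matrix (Fin M) (Fin M) (Fin 2))
    (h : MarkovShift A ≃ₜ MarkovShift B)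
    (b1 : MarkovShift A → ℕ) (b2 : MarkovShift B → ℕ)
    (hb1 : Continuous b1) (hb2 : Continuous b2)
    (Nh : ℕ)
    (hphi : ∀ x : MarkovShift A,
      (mshift B)^[b1 (mshift A x)] (h (mshift A x))
        = mshift B ((mshift B)^[b1 x] (h x)))
    (hpsi : ∀ y : MarkovShift B,
      (mshift A)^[b2 (mshift B y)] (h.symm (mshift B y))
        = mshift A ((mshift A)^[b2 y] (h.symm y)))
    (hNh : ∀ x : MarkovShift A, b1 x + b2 (h x) = Nh) :
    (∀ x : MarkovShift A,
      (mshift A)^[b2 ((mshift B)^[b1 x] (h x))] (h.symm ((mshift B)^[b1 x] (h x)))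
        = (mshift A)^[Nh] x) ∧
    (∀ y : MarkovShift B,
      (mshift B)^[b1 ((mshift A)^[b2 y] (h.symm y))] (h ((mshift A)^[b2 y] (h.symm y)))
        = (mshift B)^[Nh] y) := by
  have psiIt : ∀ (n : ℕ) (y : MarkovShift B),
      (mshift A)^[b2 ((mshift B)^[n] y)] (h.symm ((mshift B)^[n] y))
        = (mshift A)^[n] ((mshift A)^[b2 y] (h.symm y)) := by
    intro n
    induction n with
    | zero => intro y; simp
    | succ n ih =>
      intro y
      rw [Function.iterate_succ_apply, ih (mshift B y), hpsi y,
        ← Function.iterate_succ_apply]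
  have phiIt : ∀ (n : ℕ) (x : MarkovShift A),
      (mshift B)^[b1 ((mshift A)^[n] x)] (h ((mshift A)^[n] x))
        = (mshift B)^[n] ((mshift B)^[b1 x] (h x)) := by
    intro n
    induction n with
    | zero => intro x; simp
    | succ n ih =>
      intro x
      rw [Function.iterate_succ_apply, ih (mshift A x), hphi x,
        ← Function.iterate_succ_apply]
  constructor
  · intro x
    rw [psiIt (b1 x) (h x)]
    simp only [Homeomorph.symm_apply_apply]
    rw [← Function.iterate_add_apply, hNh x]
  · intro y
    rw [phiIt (b2 y) (h.symm y)]
    simp only [Homeomorph.apply_symm_apply]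
    rw [← Function.iterate_add_apply]
    have := hNh (h.symm y)
    rw [Homeomorph.apply_symm_apply] at this
    rw [Nat.add_comm, this]
end

section
/- Let $h: X_A \to X_B$ be a homeomorphism such that there exist a two-sided topological conjugacy $\bar{h}: (\bar{X}_A,\bar{\sigma}_A) \to (\bar{X}_B,\bar{\sigma}_B)$ and a continuous function $f_1: X_A \to \mathbb{Z}_{\geq 0}$ with $\pi_B(\bar{h}(\bar{x})) = \sigma_B^{f_1(\pi_A(\bar{x}))}(h(\pi_A(\bar{x})))$ for all $\bar{x} \in \bar{X}_A$, where $\pi_A, \pi_B$ are the restrictions to nonnegative coordinates. Then $\sigma_B^{f_1(x)+1}(h(x)) = \sigma_B^{f_1(\sigma_A(x))}(h(\sigma_A(x)))$ for all $x \in X_A$; in particular $h$ is a continuous orbit map with $k_1 = f_1\circ\sigma_A$, $l_1 = f_1 + 1$, whose cocycle $l_1 - k_1 = 1 + f_1 - f_1\circ\sigma_A$ is cohomologous to the constant 1 (so $h$ is a strongly continuous orbit map). -/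
open Function Finset

/-- The projection `π_A` onto the nonnegative coordinates. -/
def projPos {N : ℕ} (A : Matrix (Fin N) (Fin N) (Fin 2)) :
    MarkovShift2 A → MarkovShift A :=
  fun x => ⟨fun n => x.1 (n : ℤ), fun n => by
    have := x.2 (n : ℤ)
    rwa [show ((n : ℤ) + 1) = (((n + 1 : ℕ)) : ℤ) by push_cast; ring] at this⟩

/-- a homeomorphism `h` compatible with a two-sided conjugacy via a
continuous function `f_1` satisfies `σ_B^{f_1(x)+1}(h x) = σ_B^{f_1(σ_A x)}(h(σ_A x))`;
in particular `h` is a (strongly) continuous orbit map with `k_1 = f_1∘σ_A`,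
`l_1 = f_1 + 1`. -/
theorem conjugacy_gives_strong_orbit_map {N M : ℕ}
    (A : Matrix (Fin N) (Fin N) (Fin 2)) (B : Matrix (Fin M) (Fin M) (Fin 2))
    (h : MarkovShift A ≃ₜ MarkovShift B)
    (hbar : MarkovShift2 A ≃ₜ MarkovShift2 B)
    (hconj : ∀ x : MarkovShift2 A, hbar (mshift2 A x) = mshift2 B (hbar x))
    (f1 : MarkovShift A → ℕ) (hf1 : Continuous f1)
    (hsurj : Function.Surjective (projPos A))
    (hcompat : ∀ xbar : MarkovShift2 A,
      projPos B (hbar xbar)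
        = (mshift B)^[f1 (projPos A xbar)] (h (projPos A xbar))) :
    ∀ x : MarkovShift A,
      (mshift B)^[f1 x + 1] (h x) = (mshift B)^[f1 (mshift A x)] (h (mshift A x)) := by
  have proj_shift : ∀ {K : ℕ} (C : Matrix (Fin K) (Fin K) (Fin 2))
      (y : MarkovShift2 C), projPos C (mshift2 C y) = mshift C (projPos C y) := by
    intro K C y
    apply Subtype.ext
    funext n
    show y.1 ((n : ℤ) + 1) = y.1 ((n + 1 : ℕ) : ℤ)
    push_cast
    ring_nf
  intro x
  obtain ⟨xbar, rfl⟩ := hsurj x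
  have h1 := hcompat (mshift2 A xbar)
  rw [hconj, proj_shift A, proj_shift B, hcompat xbar] at h1
  rw [← h1, ← Function.iterate_succ_apply' (mshift B)]
end
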